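/- arXiv:2112.02742 — 6 statements merged into one kernel-verified Lean document; each statement's English description precedes it below -/
import Mathlib

section
/- Let L : (0,∞) → (0,∞) be a positive monotone function that is slowly varying, i.e. L(tx)/L(t) → 1 as t → ∞ for every x > 0. Let a > 0, let (b_n) be a sequence tending to infinity, and for each n let ξ_n ∈ (a, b_n) be given by the mean value theorem for the integral ∫_a^{b_n} x^{r-1-α} L(x) dx = L(ξ_n) ∫_a^{b_n} x^{r-1-α} dx, where r ≥ 1 and 0 < α < 1. Then L(ξ_n)/L(b_n) → 1 as n → ∞. -/
open Filter MeasureTheory Real Set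

section aux
lemma sv_contOn_rpow (z u v : ℝ) (hu : 0 < u) (hv : 0 < v) :
    ContinuousOn (fun x : ℝ => x ^ z) (Set.uIcc u v) := by
  intro x hx
  have hx0 : 0 < x := by
    rcases Set.mem_uIcc.mp hx with ⟨h1, _⟩ | ⟨h1, _⟩ <;> linarith
  exact (Real.continuousAt_rpow_const x z (Or.inl hx0.ne')).continuousWithinAt

lemma sv_int (L : ℝ → ℝ) (hLmono : Monotone L ∨ Antitone L) (z u v : ℝ)
    (hu : 0 < u) (hv : 0 < v) :
    IntervalIntegrable (fun x => x ^ z * L x) volume u v := by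
  have hLint : IntervalIntegrable L volume u v := by
    rcases hLmono with h | h
    · exact (h.monotoneOn _).intervalIntegrable
    · exact (h.antitoneOn _).intervalIntegrable
  exact hLint.continuousOn_mul (sv_contOn_rpow z u v hu hv)
end aux


lemma sv_doubling (L : ℝ → ℝ) (hA : Antitone L) (K T : ℝ) (hK : 1 ≤ K) (hT0 : 0 < T)
    (hLnn : ∀ x, 0 < x → 0 ≤ L x)
    (hT : ∀ t, T ≤ t → L t ≤ K * L (2*t)) :
    ∀ k : ℕ, ∀ s t : ℝ, T ≤ s → s ≤ t → t ≤ s * 2^(k+1) → L s ≤ K^(k+1) * L t := by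
  intro k
  induction k with
  | zero =>
    intro s t hTs hst h2
    have hs0 : 0 < s := lt_of_lt_of_le hT0 hTs
    have h1 : L s ≤ K * L (2*s) := hT s hTs
    have h2'' : t ≤ 2*s := by norm_num at h2; linarith
    have h2' : L (2*s) ≤ L t := hA h2''
    calc L s ≤ K * L (2*s) := h1
      _ ≤ K^1 * L t := by rw [pow_one]; exact mul_le_mul_of_nonneg_left h2' (by linarith)
  | succ k ih =>
    intro s t hTs hst h2
    have hs0 : 0 < s := lt_of_lt_of_le hT0 hTs
    have ht0 : 0 < t := lt_of_lt_of_le hs0 hst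
    have hK0 : (0:ℝ) < K := by linarith
    by_cases h : t ≤ 2*s
    · have h1 : L s ≤ K * L (2*s) := hT s hTs
      have h2' : L (2*s) ≤ L t := hA h
      have : L s ≤ K * L t := le_trans h1 (mul_le_mul_of_nonneg_left h2' hK0.le)
      calc L s ≤ K * L t := this
        _ ≤ K^(k+2) * L t := by
            apply mul_le_mul_of_nonneg_right _ (hLnn t ht0)
            calc K = K^1 := (pow_one K).symm
              _ ≤ K^(k+2) := pow_le_pow_right₀ hK (by omega)
    · push_neg at h
      have hih := ih (2*s) t (by linarith) h.le (by rw [pow_succ] at h2; nlinarith [pow_pos (zero_lt_two (α := ℝ)) (k+1)])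
      calc L s ≤ K * L (2*s) := hT s hTs
        _ ≤ K * (K^(k+1) * L t) := mul_le_mul_of_nonneg_left hih hK0.le
        _ = K^(k+2) * L t := by ring

lemma sv_potter (L : ℝ → ℝ) (hA : Antitone L) (K T : ℝ) (hK : 1 ≤ K) (hT0 : 0 < T)
    (hLnn : ∀ x, 0 < x → 0 ≤ L x)
    (hT : ∀ t, T ≤ t → L t ≤ K * L (2*t)) :
    ∀ s t : ℝ, T ≤ s → s ≤ t → L s ≤ K^2 * (t/s)^(logb 2 K) * L t := by
  intro s t hTs hst
  have hs0 : 0 < s := lt_of_lt_of_le hT0 hTs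
  have ht0 : 0 < t := lt_of_lt_of_le hs0 hst
  have hK0 : (0:ℝ) < K := by linarith
  have hts1 : (1:ℝ) ≤ t/s := (one_le_div hs0).2 hst
  have hts0 : (0:ℝ) < t/s := by linarith
  have hlog0 : 0 ≤ logb 2 (t/s) := logb_nonneg one_lt_two hts1
  set k : ℕ := ⌈logb 2 (t/s)⌉₊ with hk
  have hle : t ≤ s * 2^(k+1) := by
    have hds : t/s ≤ (2:ℝ)^(k+1) := by
      calc t/s = (2:ℝ) ^ (logb 2 (t/s)) := (rpow_logb two_pos (by norm_num) hts0).symm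
        _ ≤ (2:ℝ) ^ ((((k+1:ℕ)):ℝ)) :=
            rpow_le_rpow_of_exponent_le one_le_two
              (by push_cast; linarith [Nat.le_ceil (logb 2 (t/s))])
        _ = (2:ℝ)^(k+1) := rpow_natCast 2 (k+1)
    have := (div_le_iff₀ hs0).1 hds
    linarith
  have hmain := sv_doubling L hA K T hK hT0 hLnn hT k s t hTs hst hle
  refine le_trans hmain (mul_le_mul_of_nonneg_right ?_ (hLnn t ht0))
  -- K^(k+1) ≤ K^2 * (t/s)^(logb 2 K)
  have h1 : (K:ℝ)^(k+1) = K ^ (((k:ℝ)+1)) := by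
    rw [show ((k:ℝ)+1) = ((k+1 : ℕ) : ℝ) by push_cast; ring, rpow_natCast]
  have h2 : K ^ (((k:ℝ)+1)) ≤ K ^ (logb 2 (t/s) + 2) := by
    apply rpow_le_rpow_of_exponent_le hK
    have := Nat.ceil_lt_add_one hlog0
    linarith
  have h3 : K ^ (logb 2 (t/s) + 2) = K^2 * K ^ (logb 2 (t/s)) := by
    rw [rpow_add hK0, ← rpow_natCast K 2]; push_cast; ring
  have h4 : K ^ (logb 2 (t/s)) = (t/s) ^ (logb 2 K) := by
    rw [rpow_def_of_pos hK0, rpow_def_of_pos hts0, logb, logb]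
    congr 1; ring
  rw [h1]
  calc K ^ (((k:ℝ)+1)) ≤ K ^ (logb 2 (t/s) + 2) := h2
    _ = K^2 * (t/s)^(logb 2 K) := by rw [h3, h4]


lemma sv_main (L : ℝ → ℝ)
    (hLpos : ∀ x > 0, 0 < L x)
    (hLmono : Monotone L ∨ Antitone L)
    (hLsv : ∀ x > 0, Tendsto (fun t => L (t * x) / L t) atTop (nhds 1))
    (a : ℝ) (ha : 0 < a) (b : ℕ → ℝ) (hb : Tendsto b atTop atTop)
    (p : ℝ) (hp : -1 < p) :
    Tendsto (fun n => (∫ x in a..b n, x ^ p * L x) / (L (b n) * (b n) ^ (p+1)))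
      atTop (nhds (1/(p+1))) := by
  set q : ℝ := p + 1 with hqdef
  have hq : 0 < q := by simp [hqdef]; linarith
  rw [tendsto_order]
  constructor
  · -- lower bound
    intro l hl
    set ε : ℝ := 1/q - l with hεdef
    have hε : 0 < ε := by rw [hεdef]; exact sub_pos.mpr hl
    set γ : ℝ := min (q*ε/2) (1/2) with hγdef
    have hγ0 : 0 < γ := by positivity
    have hγ1 : γ ≤ 1/2 := min_le_right _ _
    have hγε : γ < q*ε := lt_of_le_of_lt (min_le_left _ _) (by nlinarith)
    set c : ℝ := γ ^ (1/q) with hcdef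
    have hc0 : 0 < c := rpow_pos_of_pos hγ0 _
    have hc1 : c < 1 := rpow_lt_one hγ0.le (by linarith) (by positivity)
    have hcq : c ^ q = γ := by
      rw [hcdef, ← rpow_mul hγ0.le, one_div, inv_mul_cancel₀ hq.ne', rpow_one]
    -- target auxiliary sequence
    have hmin : Tendsto (fun n => min (L (b n * c)) (L (b n)) / L (b n)) atTop (nhds 1) := by
      have h1 : Tendsto (fun n => L (b n * c) / L (b n)) atTop (nhds 1) :=
        (hLsv c hc0).comp hb
      have h2 : Tendsto (fun n => min (L (b n * c) / L (b n)) 1) atTop (nhds 1) := by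
        have := h1.min (tendsto_const_nhds (x := (1:ℝ)) (f := atTop))
        simpa using this
      apply h2.congr'
      filter_upwards [hb.eventually (eventually_gt_atTop (0:ℝ))] with n hn
      have hLB : 0 < L (b n) := hLpos _ hn
      rw [← min_div_div_right hLB.le, div_self hLB.ne']
    have hlim : Tendsto (fun n => min (L (b n * c)) (L (b n)) / L (b n) * ((1-γ)/q))
        atTop (nhds ((1-γ)/q)) := by
      simpa using hmin.mul_const ((1-γ)/q)
    have hl' : l < (1-γ)/q := by
      have h1 : γ/q < ε := by rw [div_lt_iff₀ hq]; nlinarith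
      have : (1-γ)/q = 1/q - γ/q := by ring
      rw [this]; simp only [hεdef] at h1 ⊢; linarith
    filter_upwards [hlim.eventually (eventually_gt_nhds hl'),
      hb.eventually (eventually_gt_atTop (max (a/c) 1))] with n hsn hB
    have hB1 : 1 < b n := lt_of_le_of_lt (le_max_right _ _) hB
    have hB0 : 0 < b n := by linarith
    have hLB : 0 < L (b n) := hLpos _ hB0
    have hacB : a < b n * c := by
      have := lt_of_le_of_lt (le_max_left _ _) hB
      calc a = a/c * c := by field_simp
        _ < b n * c := by exact mul_lt_mul_of_pos_right this hc0
    have hcB0 : 0 < b n * c := by positivity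
    have hcBB : b n * c ≤ b n := by nlinarith
    set m : ℝ := min (L (b n * c)) (L (b n)) with hmdef
    have hm0 : 0 < m := lt_min (hLpos _ hcB0) hLB
    -- split the integral
    have hint1 := sv_int L hLmono p a (b n * c) ha hcB0
    have hint2 := sv_int L hLmono p (b n * c) (b n) hcB0 hB0
    have hsplit : (∫ x in a..b n, x ^ p * L x)
        = (∫ x in a..b n * c, x ^ p * L x) + ∫ x in (b n * c)..b n, x ^ p * L x :=
      (intervalIntegral.integral_add_adjacent_intervals hint1 hint2).symm
    have hpos1 : 0 ≤ ∫ x in a..b n * c, x ^ p * L x := by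
      apply intervalIntegral.integral_nonneg hacB.le
      intro x hx
      have hx0 : 0 < x := lt_of_lt_of_le ha hx.1
      exact le_of_lt (mul_pos (rpow_pos_of_pos hx0 _) (hLpos _ hx0))
    have hmono2 : (∫ x in (b n * c)..b n, (fun x => x ^ p * m) x)
        ≤ ∫ x in (b n * c)..b n, x ^ p * L x := by
      apply intervalIntegral.integral_mono_on hcBB _ hint2
      · intro x hx
        have hx0 : 0 < x := lt_of_lt_of_le hcB0 hx.1
        have hmLx : m ≤ L x := by
          rcases hLmono with h | h
          · exact le_trans (min_le_left _ _) (h hx.1)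
          · exact le_trans (min_le_right _ _) (h hx.2)
        exact mul_le_mul_of_nonneg_left hmLx (rpow_pos_of_pos hx0 _).le
      · exact ((sv_contOn_rpow p _ _ hcB0 hB0).mul continuousOn_const).intervalIntegrable
    have hval : (∫ x in (b n * c)..b n, (fun x => x ^ p * m) x)
        = (b n) ^ q * (1-γ)/q * m := by
      rw [intervalIntegral.integral_mul_const, integral_rpow (Or.inl hp)]
      rw [mul_rpow hB0.le hc0.le, hcq]
      ring
    have hchain : (b n) ^ q * (1-γ)/q * m ≤ ∫ x in a..b n, x ^ p * L x := by
      rw [hsplit, ← hval]; linarith [hmono2]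
    have hfin : m / L (b n) * ((1-γ)/q)
        ≤ (∫ x in a..b n, x ^ p * L x) / (L (b n) * (b n) ^ q) := by
      rw [div_mul_eq_mul_div, div_le_div_iff₀ hLB (by positivity)]
      calc m * ((1-γ)/q) * (L (b n) * (b n) ^ q)
          = ((b n) ^ q * (1-γ)/q * m) * L (b n) := by ring
        _ ≤ (∫ x in a..b n, x ^ p * L x) * L (b n) :=
            mul_le_mul_of_nonneg_right hchain hLB.le
    calc l < m / L (b n) * ((1-γ)/q) := hsn
      _ ≤ _ := hfin
  · intro u hu
    rcases hLmono with hM | hA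
    · -- monotone case: ratio ≤ 1/q
      filter_upwards [hb.eventually (eventually_gt_atTop (max a 1))] with n hB
      have hB0 : 0 < b n := by have := le_max_right a 1; linarith
      have haB : a < b n := lt_of_le_of_lt (le_max_left _ _) hB
      have hLB : 0 < L (b n) := hLpos _ hB0
      have hIle : (∫ x in a..b n, x ^ p * L x)
          ≤ ∫ x in a..b n, (fun x => x ^ p * L (b n)) x := by
        apply intervalIntegral.integral_mono_on haB.le
          (sv_int L (Or.inl hM) p a (b n) ha hB0)
          (((sv_contOn_rpow p _ _ ha hB0).mul continuousOn_const).intervalIntegrable)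
        intro x hx
        have hx0 : 0 < x := lt_of_lt_of_le ha hx.1
        exact mul_le_mul_of_nonneg_left (hM hx.2) (rpow_pos_of_pos hx0 _).le
      have hval : (∫ x in a..b n, (fun x => x ^ p * L (b n)) x)
          = ((b n) ^ q - a ^ q) / q * L (b n) := by
        rw [intervalIntegral.integral_mul_const, integral_rpow (Or.inl hp)]
      have hle1q : (∫ x in a..b n, x ^ p * L x) / (L (b n) * (b n) ^ q) ≤ 1/q := by
        rw [div_le_div_iff₀ (by positivity) hq]
        have haq : 0 < a ^ q := rpow_pos_of_pos ha _
        calc (∫ x in a..b n, x ^ p * L x) * q ≤ ((b n) ^ q - a ^ q) / q * L (b n) * q := by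
              have := le_trans hIle (le_of_eq hval); nlinarith
          _ = ((b n) ^ q - a ^ q) * L (b n) := by field_simp
          _ ≤ 1 * (L (b n) * (b n) ^ q) := by nlinarith
      exact lt_of_le_of_lt hle1q hu
    · -- antitone case: Potter bounds
      set u' : ℝ := (1/q + u) / 2 with hu'def
      have hu'1 : 1/q < u' := by rw [hu'def]; linarith
      have hu'2 : u' < u := by rw [hu'def]; linarith
      -- choose δ
      have hclog : ContinuousAt (fun d : ℝ => logb 2 (1+d)) 0 := by
        have h1 : ContinuousAt Real.log ((1:ℝ)+0) := Real.continuousAt_log (by norm_num)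
        have h2 : ContinuousAt (fun d : ℝ => Real.log (1+d)) 0 :=
          h1.comp (by fun_prop)
        simpa [Real.logb] using h2.div_const (Real.log 2)
      have hclog0 : Tendsto (fun d : ℝ => logb 2 (1+d)) (nhds 0) (nhds 0) := by
        simpa using hclog.tendsto
      have hg : Tendsto (fun d : ℝ => (1+d)^2 / (q - logb 2 (1+d))) (nhds 0) (nhds (1/q)) := by
        have h2 : ContinuousAt (fun d : ℝ => (1+d)^2 / (q - logb 2 (1+d))) 0 := by
          apply ContinuousAt.div (by fun_prop) (continuousAt_const.sub hclog)
          simpa using hq.ne'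
        have h3 : (fun d : ℝ => (1+d)^2 / (q - logb 2 (1+d))) 0 = 1/q := by
          norm_num
        rw [← h3]; exact h2.tendsto
      have hev : ∀ᶠ d in nhdsWithin (0:ℝ) (Set.Ioi 0),
          (1+d)^2 / (q - logb 2 (1+d)) < u' ∧ logb 2 (1+d) < q/2 := by
        apply eventually_nhdsWithin_of_eventually_nhds
        exact (hg.eventually (eventually_lt_nhds hu'1)).and
          (hclog0.eventually (eventually_lt_nhds (by positivity)))
      obtain ⟨δ, ⟨hgδ, hηδ⟩, hδ0⟩ := (hev.and self_mem_nhdsWithin).exists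
      set K : ℝ := 1 + δ with hKdef
      have hK1 : 1 < K := by rw [hKdef]; linarith
      have hK0 : 0 < K := by linarith
      set η : ℝ := logb 2 K with hηdef
      have hη0 : 0 ≤ η := logb_nonneg one_lt_two (by linarith)
      have hηq : η < q/2 := hηδ
      have hpη : -1 < p - η := by simp only [hqdef] at hηq ⊢; linarith
      have hqη : 0 < q - η := by linarith
      -- find T
      have hTexists : ∀ᶠ t : ℝ in atTop, (K⁻¹ < L (t*2) / L t) ∧ max a 1 < t := by
        refine ((hLsv 2 two_pos).eventually (eventually_gt_nhds ?_)).and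
          (eventually_gt_atTop _)
        rw [inv_lt_one_iff₀]; right; exact hK1
      obtain ⟨T, hT⟩ := eventually_atTop.1 hTexists
      have hTa : a < T ∨ True := Or.inr trivial
      set T' : ℝ := max T (max a 1 + 1) with hT'def
      have hT'T : T ≤ T' := le_max_left _ _
      have hT'a : a < T' := by
        have := le_max_right T (max a 1 + 1)
        have h1 : a ≤ max a 1 := le_max_left _ _
        linarith
      have hT'0 : 0 < T' := by
        have := le_max_right T (max a 1 + 1)
        have h1 : (1:ℝ) ≤ max a 1 := le_max_right _ _
        linarith
      have hdb : ∀ t, T' ≤ t → L t ≤ K * L (2*t) := by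
        intro t ht
        obtain ⟨h1, h2⟩ := hT t (le_trans hT'T ht)
        have ht0 : 0 < t := by have := le_max_right a 1; linarith
        have hLt : 0 < L t := hLpos t ht0
        have h3 : K⁻¹ * L t < L (t*2) := (lt_div_iff₀ hLt).1 h1
        calc L t = K * (K⁻¹ * L t) := by field_simp
          _ ≤ K * L (t*2) := mul_le_mul_of_nonneg_left h3.le hK0.le
          _ = K * L (2*t) := by rw [mul_comm t 2]
      have hPot := sv_potter L hA K T' hK1.le hT'0 (fun x hx => (hLpos x hx).le) hdb
      set C : ℝ := ∫ x in a..T', x ^ p * L x with hCdef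
      have hLbB : Tendsto (fun n => L (b n) * (b n) ^ q) atTop atTop := by
        have hLT' : 0 < L T' := hLpos T' hT'0
        have hc0' : 0 < L T' * T' ^ η / K^2 := by positivity
        apply tendsto_atTop_mono' atTop ?_
          (((tendsto_rpow_atTop hqη).comp hb).const_mul_atTop hc0')
        filter_upwards [hb.eventually (eventually_ge_atTop T')] with n hTb
        have hB0 : 0 < b n := lt_of_lt_of_le hT'0 hTb
        have hLB : 0 < L (b n) := hLpos _ hB0
        have hpot := hPot T' (b n) le_rfl hTb
        have hTη : 0 < T' ^ η := rpow_pos_of_pos hT'0 _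
        have hBη : 0 < (b n) ^ η := rpow_pos_of_pos hB0 _
        have key : L T' * T' ^ η ≤ K^2 * (b n) ^ η * L (b n) := by
          rw [div_rpow hB0.le hT'0.le] at hpot
          calc L T' * T' ^ η ≤ (K^2 * ((b n) ^ η / T' ^ η) * L (b n)) * T' ^ η :=
                mul_le_mul_of_nonneg_right hpot hTη.le
            _ = K^2 * (b n) ^ η * L (b n) := by field_simp
        show L T' * T' ^ η / K^2 * ((fun x => x ^ (q - η)) (b n)) ≤ L (b n) * (b n) ^ q
        have e1 : L T' * T' ^ η / K ^ 2 * (b n) ^ (q - η)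
            = (L T' * T' ^ η) * ((b n) ^ q) / (K^2 * (b n) ^ η) := by
          rw [rpow_sub hB0]; field_simp
        rw [e1, div_le_iff₀ (by positivity)]
        calc (L T' * T' ^ η) * (b n) ^ q ≤ (K^2 * (b n) ^ η * L (b n)) * (b n) ^ q :=
              mul_le_mul_of_nonneg_right key (by positivity)
          _ = L (b n) * (b n) ^ q * (K^2 * (b n) ^ η) := by ring
      have hC0 : Tendsto (fun n => C / (L (b n) * (b n) ^ q)) atTop (nhds 0) :=
        tendsto_const_nhds.div_atTop hLbB
      filter_upwards [hC0.eventually (eventually_lt_nhds (by linarith : (0:ℝ) < u - u')),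
        hb.eventually (eventually_gt_atTop T')] with n hCn hTb
      have hB0 : 0 < b n := lt_trans hT'0 hTb
      have hLB : 0 < L (b n) := hLpos _ hB0
      have hint1 := sv_int L (Or.inr hA) p a T' ha hT'0
      have hint2 := sv_int L (Or.inr hA) p T' (b n) hT'0 hB0
      have hsplit : (∫ x in a..b n, x ^ p * L x) = C + ∫ x in T'..b n, x ^ p * L x :=
        (intervalIntegral.integral_add_adjacent_intervals hint1 hint2).symm
      have hmono2 : (∫ x in T'..b n, x ^ p * L x)
          ≤ ∫ x in T'..b n, (fun x => (K^2 * L (b n) * (b n) ^ η) * x ^ (p - η)) x := by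
        apply intervalIntegral.integral_mono_on hTb.le hint2
          ((continuousOn_const.mul (sv_contOn_rpow (p-η) _ _ hT'0 hB0)).intervalIntegrable)
        intro x hx
        have hx0 : 0 < x := lt_of_lt_of_le hT'0 hx.1
        have hxη : 0 < x ^ η := rpow_pos_of_pos hx0 _
        have hpot := hPot x (b n) hx.1 hx.2
        calc x ^ p * L x ≤ x ^ p * (K^2 * ((b n)/x) ^ η * L (b n)) :=
              mul_le_mul_of_nonneg_left hpot (rpow_pos_of_pos hx0 _).le
          _ = (K^2 * L (b n) * (b n) ^ η) * x ^ (p - η) := by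
              rw [div_rpow hB0.le hx0.le, rpow_sub hx0]; field_simp
      have hval : (∫ x in T'..b n, (fun x => (K^2 * L (b n) * (b n) ^ η) * x ^ (p - η)) x)
          ≤ K^2 * L (b n) * (b n) ^ q / (q - η) := by
        rw [intervalIntegral.integral_const_mul, integral_rpow (Or.inl hpη)]
        have h1 : p - η + 1 = q - η := by rw [hqdef]; ring
        rw [h1]
        have hTq : 0 < T' ^ (q - η) := rpow_pos_of_pos hT'0 _
        have hBid : (b n) ^ η * (b n) ^ (q - η) = (b n) ^ q := by
          rw [← rpow_add hB0]; ring_nf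
        calc K^2 * L (b n) * (b n) ^ η * (((b n) ^ (q-η) - T' ^ (q-η)) / (q - η))
            ≤ K^2 * L (b n) * (b n) ^ η * ((b n) ^ (q-η) / (q - η)) := by
              apply mul_le_mul_of_nonneg_left _ (by positivity)
              gcongr
              linarith
          _ = K^2 * L (b n) * (b n) ^ q / (q - η) := by rw [← hBid]; ring
      have hpos : 0 < L (b n) * (b n) ^ q := by positivity
      have hfinal : (∫ x in a..b n, x ^ p * L x) / (L (b n) * (b n) ^ q)
          ≤ C / (L (b n) * (b n) ^ q) + K^2/(q - η) := by
        have hIle : (∫ x in a..b n, x ^ p * L x)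
            ≤ C + K^2 * L (b n) * (b n) ^ q / (q - η) := by
          rw [hsplit]; linarith [le_trans hmono2 hval]
        calc (∫ x in a..b n, x ^ p * L x) / (L (b n) * (b n) ^ q)
            ≤ (C + K^2 * L (b n) * (b n) ^ q / (q - η)) / (L (b n) * (b n) ^ q) := by
              gcongr
          _ = C / (L (b n) * (b n) ^ q) + K^2/(q - η) := by
              rw [add_div]
              congr 1
              rw [div_div, mul_comm (q - η) (L (b n) * (b n) ^ q), ← div_div]
              congr 1
              rw [mul_assoc, mul_div_assoc, div_self hpos.ne', mul_one]
      calc (∫ x in a..b n, x ^ p * L x) / (L (b n) * (b n) ^ q)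
          ≤ C / (L (b n) * (b n) ^ q) + K^2/(q - η) := hfinal
        _ < (u - u') + u' := add_lt_add hCn hgδ
        _ = u := by ring

/-- mean-value-theorem point for ∫ x^{r-1-α} L(x) dx satisfies
`L(ξ_n)/L(b_n) → 1` when `L` is positive, monotone and slowly varying. -/
theorem slowly_varying_mvt_ratio (L : ℝ → ℝ)
    (hLpos : ∀ x > 0, 0 < L x)
    (hLmono : Monotone L ∨ Antitone L)
    (hLsv : ∀ x > 0, Tendsto (fun t => L (t * x) / L t) atTop (nhds 1))
    (a : ℝ) (ha : 0 < a) (b : ℕ → ℝ) (hb : Tendsto b atTop atTop)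
    (r α : ℝ) (hr : 1 ≤ r) (hα0 : 0 < α) (hα1 : α < 1)
    (ξ : ℕ → ℝ) (hξ : ∀ n, a < ξ n ∧ ξ n < b n)
    (hmv : ∀ n, (∫ x in a..(b n), x ^ (r - 1 - α) * L x)
        = L (ξ n) * ∫ x in a..(b n), x ^ (r - 1 - α)) :
    Tendsto (fun n => L (ξ n) / L (b n)) atTop (nhds 1) := by
  set p : ℝ := r - 1 - α with hpdef
  have hp : -1 < p := by rw [hpdef]; linarith
  set q : ℝ := p + 1 with hqdef
  have hq : 0 < q := by rw [hqdef, hpdef]; linarith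
  have hA := sv_main L hLpos hLmono hLsv a ha b hb p hp
  rw [← hqdef] at hA
  have hBq : Tendsto (fun n => (b n) ^ q) atTop atTop := (tendsto_rpow_atTop hq).comp hb
  have hB : Tendsto (fun n => (∫ x in a..b n, x ^ p) / (b n) ^ q) atTop (nhds (1/q)) := by
    have h2 : Tendsto (fun n => a ^ q / (b n) ^ q) atTop (nhds 0) :=
      tendsto_const_nhds.div_atTop hBq
    have h1 : Tendsto (fun n => (1 - a ^ q / (b n) ^ q) / q) atTop (nhds (1/q)) := by
      have := ((tendsto_const_nhds (x := (1:ℝ)) (f := atTop)).sub h2).div_const q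
      simpa using this
    apply h1.congr'
    filter_upwards [hb.eventually (eventually_gt_atTop (0:ℝ))] with n hn
    have hbq : (0:ℝ) < (b n) ^ q := rpow_pos_of_pos hn _
    rw [integral_rpow (Or.inl hp), ← hqdef]
    rw [div_div, mul_comm q ((b n) ^ q), ← div_div]
    congr 1
    rw [sub_div, div_self hbq.ne']
  have hfin := hA.div hB (one_div_ne_zero hq.ne')
  have hone : (1/q)/(1/q) = (1:ℝ) := div_self (one_div_ne_zero hq.ne')
  rw [hone] at hfin
  apply hfin.congr'
  filter_upwards [hb.eventually (eventually_gt_atTop (max a 1))] with n hn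
  have hab : a < b n := lt_of_le_of_lt (le_max_left _ _) hn
  have hb0 : 0 < b n := by have := le_max_right a 1; linarith
  have hLB : 0 < L (b n) := hLpos _ hb0
  have hbq : (0:ℝ) < (b n) ^ q := rpow_pos_of_pos hb0 _
  have hJ : (0:ℝ) < ∫ x in a..b n, x ^ p := by
    rw [integral_rpow (Or.inl hp), ← hqdef]
    have h3 : a ^ q < (b n) ^ q := rpow_lt_rpow ha.le hab hq
    apply div_pos (by linarith) hq
  simp only [Pi.div_apply]
  rw [hmv n, div_div_div_comm, mul_div_assoc, div_self hJ.ne', mul_one,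
    mul_div_assoc, div_self hbq.ne', mul_one]
end

section
/- Let X have density f(x) = c·cos(x^{-α})/(x^{1+α}(sin(x^{-α})+1)) for x ≥ 1 (with c > 0 the normalizing constant) and f(x) = 0 otherwise, where 0 < α < 1. Then the tail satisfies 1 - F(b) = (c/α)·log(sin(b^{-α}) + 1) = (1 + o(1))·(c/α)·b^{-α} as b → ∞. -/
open Filter MeasureTheory Real

lemma sin_pos_aux (α x : ℝ) (hα0 : 0 < α) (hx : 1 ≤ x) :
    0 < Real.sin (x ^ (-α)) := by
  have hx0 : (0:ℝ) < x := lt_of_lt_of_le one_pos hx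
  have h1 : 0 < x ^ (-α) := Real.rpow_pos_of_pos hx0 _
  have h2 : x ^ (-α) ≤ 1 :=
    Real.rpow_le_one_of_one_le_of_nonpos hx (neg_nonpos.mpr hα0.le)
  exact Real.sin_pos_of_pos_of_lt_pi h1 (lt_of_le_of_lt h2 (by
    have := Real.pi_gt_three; linarith))

lemma deriv_aux (α c x : ℝ) (hα0 : 0 < α) (hx : 0 < x)
    (hsin : Real.sin (x ^ (-α)) + 1 ≠ 0) :
    HasDerivAt (fun y : ℝ => -(c / α) * Real.log (Real.sin (y ^ (-α)) + 1))
      (c * Real.cos (x ^ (-α)) / (x ^ (1 + α) * (Real.sin (x ^ (-α)) + 1))) x := by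
  have h1 : HasDerivAt (fun y : ℝ => y ^ (-α)) (-α * x ^ (-α - 1)) x :=
    Real.hasDerivAt_rpow_const (Or.inl hx.ne')
  have h2 : HasDerivAt (fun y : ℝ => Real.sin (y ^ (-α)) + 1)
      (Real.cos (x ^ (-α)) * (-α * x ^ (-α - 1))) x :=
    ((Real.hasDerivAt_sin _).comp x h1).add_const 1
  have h3 := (h2.log hsin).const_mul (-(c / α))
  refine h3.congr_deriv ?_
  have hxp : (0:ℝ) < x ^ (1 + α) := Real.rpow_pos_of_pos hx _
  have hinv : x ^ (-α - 1) = (x ^ (1 + α))⁻¹ := by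
    rw [show (-α - 1 : ℝ) = -(1 + α) by ring, Real.rpow_neg hx.le]
  rw [hinv]
  field_simp

/-- tail of the density
`f(x) = c cos(x^{-α}) / (x^{1+α}(sin(x^{-α})+1))` on `[1, ∞)`:
`1 - F(b) = (c/α) log(sin(b^{-α}) + 1) = (1 + o(1)) (c/α) b^{-α}` as `b → ∞`. -/
theorem tail_of_oscillating_density (α c : ℝ) (hα0 : 0 < α) (hα1 : α < 1)
    (hc : c = α / Real.log (Real.sin 1 + 1))
    (F : ℝ → ℝ)
    (hF : ∀ b, F b = ∫ x in (1:ℝ)..b,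
        c * Real.cos (x ^ (-α)) / (x ^ (1 + α) * (Real.sin (x ^ (-α)) + 1))) :
    (∀ b ≥ (1:ℝ), 1 - F b = (c / α) * Real.log (Real.sin (b ^ (-α)) + 1))
    ∧ Tendsto (fun b : ℝ => (1 - F b) / ((c / α) * b ^ (-α))) atTop (nhds 1) := by
  have hsin1 : 0 < Real.sin 1 := Real.sin_pos_of_pos_of_lt_pi one_pos (by
    have := Real.pi_gt_three; linarith)
  have hlog1 : 0 < Real.log (Real.sin 1 + 1) := Real.log_pos (by linarith)
  have hcpos : 0 < c := by rw [hc]; positivity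
  have hca : c / α * Real.log (Real.sin 1 + 1) = 1 := by
    rw [hc]; field_simp
  have key : ∀ b ≥ (1:ℝ), 1 - F b = (c / α) * Real.log (Real.sin (b ^ (-α)) + 1) := by
    intro b hb
    set G : ℝ → ℝ := fun y => -(c / α) * Real.log (Real.sin (y ^ (-α)) + 1) with hG
    have hFb : F b = G b - G 1 := by
      rw [hF b]
      apply intervalIntegral.integral_eq_sub_of_hasDerivAt
      · intro x hx
        rw [Set.uIcc_of_le hb] at hx
        have hx1 : 1 ≤ x := hx.1
        have hxpos : (0:ℝ) < x := lt_of_lt_of_le one_pos hx1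
        have := sin_pos_aux α x hα0 hx1
        exact deriv_aux α c x hα0 hxpos (by linarith)
      · apply ContinuousOn.intervalIntegrable
        rw [Set.uIcc_of_le hb]
        have hrc : ContinuousOn (fun x : ℝ => x ^ (-α)) (Set.Icc 1 b) :=
          continuousOn_id.rpow_const fun x hx => Or.inl (by
            have : (1:ℝ) ≤ x := hx.1
            simp only [id]; intro h; rw [h] at this; linarith)
        apply ContinuousOn.div
        · exact continuousOn_const.mul (Real.continuous_cos.comp_continuousOn hrc)
        · exact (continuousOn_id.rpow_const fun x hx => Or.inl (by
            have : (1:ℝ) ≤ x := hx.1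
            simp only [id]; intro h; rw [h] at this; linarith)).mul
            ((Real.continuous_sin.comp_continuousOn hrc).add continuousOn_const)
        · intro x hx
          have hx1 : 1 ≤ x := hx.1
          have hxpos : (0:ℝ) < x := lt_of_lt_of_le one_pos hx1
          have h1 : (0:ℝ) < x ^ (1 + α) := Real.rpow_pos_of_pos hxpos _
          have h2 := sin_pos_aux α x hα0 hx1
          positivity
    have hG1 : G 1 = -(c / α) * Real.log (Real.sin 1 + 1) := by
      simp [hG, Real.one_rpow]
    rw [hFb, hG1, hG]
    simp only
    have : c / α * Real.log (Real.sin 1 + 1) = 1 := hca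
    linarith [this]
  refine ⟨key, ?_⟩
  -- limit part
  have hslope : Tendsto (fun t : ℝ => Real.log (Real.sin t + 1) / t) (nhdsWithin 0 {(0:ℝ)}ᶜ)
      (nhds 1) := by
    have hd : HasDerivAt (fun t : ℝ => Real.log (Real.sin t + 1)) 1 0 := by
      have h2 : HasDerivAt (fun t : ℝ => Real.sin t + 1) (Real.cos 0) 0 :=
        (Real.hasDerivAt_sin 0).add_const 1
      have h3 := h2.log (by simp)
      simpa using h3
    have := hd.tendsto_slope_zero
    refine this.congr' ?_
    filter_upwards [self_mem_nhdsWithin] with t ht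
    simp only [Set.mem_compl_iff, Set.mem_singleton_iff] at ht
    rw [div_eq_inv_mul]
    simp
  have hcomp : Tendsto (fun b : ℝ => b ^ (-α)) atTop (nhdsWithin 0 {(0:ℝ)}ᶜ) := by
    rw [tendsto_nhdsWithin_iff]
    constructor
    · exact tendsto_rpow_neg_atTop hα0
    · filter_upwards [eventually_ge_atTop (1:ℝ)] with b hb
      have : (0:ℝ) < b ^ (-α) := Real.rpow_pos_of_pos (lt_of_lt_of_le one_pos hb) _
      simp only [Set.mem_compl_iff, Set.mem_singleton_iff]
      linarith
  have hlim := hslope.comp hcomp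
  refine hlim.congr' ?_
  filter_upwards [eventually_ge_atTop (1:ℝ)] with b hb
  have hbpos : (0:ℝ) < b := lt_of_lt_of_le one_pos hb
  have hrp : (0:ℝ) < b ^ (-α) := Real.rpow_pos_of_pos hbpos _
  have hcα : c / α ≠ 0 := by positivity
  rw [key b hb]
  simp only [Function.comp]
  field_simp
end

section
/- For 0 < α < 2 and t ∈ ℝ, the power series identity α·∑_{k=1}^∞ (-1)^k t^{2k} / ((2k-α)·(2k)!) = -α·|t|^α·∫_0^{|t|} (1 - cos x)/x^{1+α} dx holds. -/
open Filter MeasureTheory Real intervalIntegral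

lemma aux_summable (α T : ℝ) (hα2 : α < 2) (hT : 0 < T) :
    Summable (fun k : ℕ => T ^ (2*(k:ℝ)+2-α) / ((2*(k:ℝ)+2-α) * (Nat.factorial (2*k+2) : ℝ))) := by
  have h2 : Summable (fun k : ℕ => T ^ (2*k+2) / (Nat.factorial (2*k+2) : ℝ)) := by
    have := (Real.summable_pow_div_factorial T).comp_injective
      (i := fun k : ℕ => 2*k+2) (fun a b h => by simpa using h)
    simpa [Function.comp_def] using this
  apply Summable.of_nonneg_of_le (fun k => ?_) (fun k => ?_)
    ((h2.mul_left (T ^ (-α) / (2-α))))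
  · have hd : (0:ℝ) < 2*(k:ℝ)+2-α := by
      have : (0:ℝ) ≤ 2*(k:ℝ) := by positivity
      linarith
    positivity
  · have hk : (0:ℝ) ≤ 2*(k:ℝ) := by positivity
    have hd : (0:ℝ) < 2*(k:ℝ)+2-α := by linarith
    have hfac : (0:ℝ) < (Nat.factorial (2*k+2) : ℝ) := by positivity
    have hT1 : T ^ (2*(k:ℝ)+2-α) = T ^ (-α) * T ^ (2*k+2) := by
      rw [← Real.rpow_natCast T (2*k+2), ← Real.rpow_add hT]
      push_cast; ring_nf
    have hrhs : T ^ (-α) / (2-α) * (T ^ (2*k+2) / (Nat.factorial (2*k+2) : ℝ))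
        = (T ^ (-α) * T ^ (2*k+2)) / ((2-α) * (Nat.factorial (2*k+2) : ℝ)) := by
      field_simp
    rw [hT1, hrhs]
    apply div_le_div_of_nonneg_left (by positivity) (mul_pos (by linarith) hfac)
    apply mul_le_mul_of_nonneg_right _ hfac.le
    linarith

lemma aux_one_sub_cos_eq (x : ℝ) :
    1 - Real.cos x = ∑' k : ℕ, (-1:ℝ)^k * x^(2*k+2) / (Nat.factorial (2*k+2) : ℝ) := by
  have h := Real.hasSum_cos x
  have h0 : Real.cos x = 1 + ∑' k : ℕ, (-1:ℝ)^(k+1) * x^(2*(k+1)) / (Nat.factorial (2*(k+1)) : ℝ) := by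
    rw [← h.tsum_eq, Summable.tsum_eq_zero_add h.summable]
    norm_num
  have h1 : (1:ℝ) - Real.cos x
      = -∑' k : ℕ, (-1:ℝ)^(k+1) * x^(2*(k+1)) / (Nat.factorial (2*(k+1)) : ℝ) := by
    rw [h0]; ring
  rw [h1, ← tsum_neg]
  apply tsum_congr
  intro k
  have e : 2*(k+1) = 2*k+2 := by ring
  rw [e, pow_succ]
  ring

lemma aux_integral (α T : ℝ) (hα2 : α < 2) (hT : 0 < T) :
    (∫ x in (0:ℝ)..T, (1 - Real.cos x) / x ^ (1+α))
      = ∑' k : ℕ, (-1:ℝ)^k * (T ^ (2*(k:ℝ)+2-α) / ((2*(k:ℝ)+2-α) * (Nat.factorial (2*k+2) : ℝ))) := by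
  set F : ℕ → ℝ → ℝ := fun k x => ((-1:ℝ)^k / (Nat.factorial (2*k+2) : ℝ)) * x ^ (2*(k:ℝ)+1-α)
    with hF
  have hexp : ∀ k : ℕ, (-1:ℝ) < 2*(k:ℝ)+1-α := by
    intro k
    have : (0:ℝ) ≤ 2*(k:ℝ) := by positivity
    linarith
  have hexp0 : ∀ k : ℕ, (0:ℝ) < 2*(k:ℝ)+2-α := by
    intro k
    have : (0:ℝ) ≤ 2*(k:ℝ) := by positivity
    linarith
  have hint : ∀ k : ℕ, IntegrableOn (F k) (Set.Ioc 0 T) :=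
    fun k => ((intervalIntegral.intervalIntegrable_rpow' (a := 0) (b := T) (hexp k)).1).const_mul _
  have hrint : ∀ k : ℕ, (∫ x in Set.Ioc (0:ℝ) T, x ^ (2*(k:ℝ)+1-α))
      = T ^ (2*(k:ℝ)+2-α) / (2*(k:ℝ)+2-α) := by
    intro k
    rw [← intervalIntegral.integral_of_le hT.le,
      integral_rpow (Or.inl (hexp k))]
    rw [Real.zero_rpow (by
      have := hexp0 k
      intro h
      rw [show 2*(k:ℝ)+1-α+1 = 2*(k:ℝ)+2-α by ring] at h
      linarith)]
    rw [show 2*(k:ℝ)+1-α+1 = 2*(k:ℝ)+2-α by ring]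
    ring
  have hnorm : ∀ k : ℕ, (∫ x in Set.Ioc (0:ℝ) T, ‖F k x‖)
      = T ^ (2*(k:ℝ)+2-α) / ((2*(k:ℝ)+2-α) * (Nat.factorial (2*k+2) : ℝ)) := by
    intro k
    have hcong : ∀ x ∈ Set.Ioc (0:ℝ) T, ‖F k x‖
        = (1 / (Nat.factorial (2*k+2) : ℝ)) * x ^ (2*(k:ℝ)+1-α) := by
      intro x hx
      rw [hF]
      simp only [norm_mul, Real.norm_eq_abs]
      rw [abs_of_nonneg (Real.rpow_nonneg hx.1.le _), abs_div, abs_pow, abs_neg, abs_one,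
        one_pow, Nat.abs_cast]
    rw [setIntegral_congr_fun measurableSet_Ioc hcong, MeasureTheory.integral_const_mul, hrint k]
    have : (0:ℝ) < (Nat.factorial (2*k+2) : ℝ) := by positivity
    field_simp
  have hsum : Summable (fun k : ℕ => ∫ x in Set.Ioc (0:ℝ) T, ‖F k x‖) := by
    rw [funext hnorm]; exact aux_summable α T hα2 hT
  have key := MeasureTheory.integral_tsum_of_summable_integral_norm
    (μ := volume.restrict (Set.Ioc 0 T)) hint hsum
  have hpt : ∀ x ∈ Set.Ioc (0:ℝ) T, (1 - Real.cos x) / x ^ (1+α) = ∑' k : ℕ, F k x := by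
    intro x hx
    rw [aux_one_sub_cos_eq x, ← tsum_div_const]
    apply tsum_congr
    intro k
    rw [hF]
    have h1 : x ^ (2*k+2) = x ^ (2*(k:ℝ)+2) := by
      rw [← Real.rpow_natCast x (2*k+2)]; push_cast; ring_nf
    have h2 : x ^ (2*(k:ℝ)+1-α) = x ^ (2*(k:ℝ)+2) / x ^ (1+α) := by
      rw [← Real.rpow_sub hx.1]; ring_nf
    simp only []
    rw [h2, h1]
    ring
  calc (∫ x in (0:ℝ)..T, (1 - Real.cos x) / x ^ (1+α))
      = ∫ x in Set.Ioc (0:ℝ) T, (1 - Real.cos x) / x ^ (1+α) :=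
        intervalIntegral.integral_of_le hT.le
    _ = ∫ x in Set.Ioc (0:ℝ) T, ∑' k : ℕ, F k x :=
        setIntegral_congr_fun measurableSet_Ioc hpt
    _ = ∑' k : ℕ, ∫ x in Set.Ioc (0:ℝ) T, F k x := key.symm
    _ = ∑' k : ℕ, (-1:ℝ)^k * (T ^ (2*(k:ℝ)+2-α) / ((2*(k:ℝ)+2-α) * (Nat.factorial (2*k+2) : ℝ))) := by
        apply tsum_congr
        intro k
        rw [hF]
        simp only []
        rw [MeasureTheory.integral_const_mul, hrint k]
        have : (0:ℝ) < (Nat.factorial (2*k+2) : ℝ) := by positivity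
        field_simp

/-- for `0 < α < 2`,
`α ∑_{k≥1} (-1)^k t^{2k} / ((2k-α)(2k)!) = -α |t|^α ∫_0^{|t|} (1 - cos x)/x^{1+α} dx`.
(The sum over `k ≥ 1` is reindexed as a sum over `k : ℕ` via `k ↦ k + 1`.) -/
theorem series_eq_integral_one_sub_cos (α t : ℝ) (hα0 : 0 < α) (hα2 : α < 2) :
    α * ∑' k : ℕ, (-1 : ℝ) ^ (k + 1) * t ^ (2 * k + 2)
        / ((2 * (k : ℝ) + 2 - α) * (Nat.factorial (2 * k + 2) : ℝ))
      = -(α * |t| ^ α * ∫ x in (0:ℝ)..|t|, (1 - Real.cos x) / x ^ (1 + α)) := by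
  rcases eq_or_ne t 0 with rfl | ht
  · simp
  · have hT : 0 < |t| := abs_pos.2 ht
    rw [aux_integral α |t| hα2 hT]
    rw [mul_assoc, ← tsum_mul_left (a := |t| ^ α), neg_mul_eq_mul_neg, ← tsum_neg]
    congr 1
    apply tsum_congr
    intro k
    have h1 : |t| ^ α * |t| ^ (2*(k:ℝ)+2-α) = t ^ (2*k+2) := by
      rw [← Real.rpow_add hT]
      rw [show α + (2*(k:ℝ)+2-α) = ((2*k+2 : ℕ) : ℝ) by push_cast; ring]
      rw [Real.rpow_natCast, ← abs_pow, abs_of_nonneg]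
      exact (by positivity : (0:ℝ) ≤ (t^(k+1))^2).trans_eq (by ring)
    rw [show -(|t| ^ α * ((-1:ℝ)^k * (|t| ^ (2*(k:ℝ)+2-α) / ((2*(k:ℝ)+2-α) * (Nat.factorial (2*k+2) : ℝ)))))
        = (-1:ℝ)^(k+1) * ((|t| ^ α * |t| ^ (2*(k:ℝ)+2-α)) / ((2*(k:ℝ)+2-α) * (Nat.factorial (2*k+2) : ℝ))) by
      rw [pow_succ]; ring]
    rw [h1]
    ring
end

section
/- For 0 < β < 1, the improper integral ∫_0^∞ (e^{ix} - 1)/x^{1+β} dx converges (as an improper integral at infinity) and (β/1)·∫_0^∞ (e^{ix} - 1)/x^{1+β} dx = -c·(1 - i·tan(βπ/2)) with c = Γ(1-β)·cos(βπ/2). -/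
open Filter MeasureTheory Real

namespace StableAux

open Set Complex
open scoped Topology

/-- For `Re w ≤ 0`, `‖e^w - 1‖ ≤ ‖w‖`. -/
lemma norm_cexp_sub_one_le {w : ℂ} (hw : w.re ≤ 0) : ‖Complex.exp w - 1‖ ≤ ‖w‖ := by
  have hderiv : ∀ t ∈ Icc (0:ℝ) 1,
      HasDerivWithinAt (fun t : ℝ => Complex.exp ((t:ℂ) * w))
        (Complex.exp ((t:ℂ) * w) * w) (Icc (0:ℝ) 1) t := by
    intro t _
    have h1 : HasDerivAt (fun t : ℝ => (t:ℂ) * w) w t := by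
      simpa using (Complex.ofRealCLM.hasDerivAt (x := t)).mul_const w
    exact h1.cexp.hasDerivWithinAt
  have hbound : ∀ t ∈ Icc (0:ℝ) 1, ‖Complex.exp ((t:ℂ) * w) * w‖ ≤ ‖w‖ := by
    intro t ht
    rw [norm_mul]
    have hre : ((t:ℂ) * w).re ≤ 0 := by
      rw [Complex.mul_re]
      simp only [Complex.ofReal_re, Complex.ofReal_im, zero_mul, sub_zero]
      exact mul_nonpos_of_nonneg_of_nonpos ht.1 hw
    have : ‖Complex.exp ((t:ℂ) * w)‖ ≤ 1 := by
      rw [Complex.norm_exp]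
      exact Real.exp_le_one_iff.2 hre
    calc ‖Complex.exp ((t:ℂ) * w)‖ * ‖w‖ ≤ 1 * ‖w‖ :=
          mul_le_mul_of_nonneg_right this (norm_nonneg w)
      _ = ‖w‖ := one_mul _
  have key := (convex_Icc (0:ℝ) 1).norm_image_sub_le_of_norm_hasDerivWithin_le
    hderiv hbound (left_mem_Icc.2 zero_le_one) (right_mem_Icc.2 zero_le_one)
  simpa using key

variable (β : ℝ)

/-- The regularized integrand. -/
noncomputable def f (z : ℂ) (x : ℝ) : ℂ :=
  (Complex.exp (-(z * x)) - 1) / ((x ^ (1 + β) : ℝ) : ℂ)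

/-- The auxiliary absolutely convergent integral `L z = ∫ e^{-zx} x^{-β}`. -/
noncomputable def L (z : ℂ) : ℂ :=
  ∫ x in Ioi (0:ℝ), Complex.exp (-(z * x)) * ((x ^ (-β) : ℝ) : ℂ)

variable {β}

lemma f_bound (h0 : 0 < β) {z : ℂ} (hz : 0 ≤ z.re) {x : ℝ} (hx : 0 < x) :
    ‖f β z x‖ ≤ min (‖z‖ * x) 2 * x ^ (-(1 + β)) := by
  have hd : (0:ℝ) < x ^ (1 + β) := Real.rpow_pos_of_pos hx _
  have hnum : ‖Complex.exp (-(z * x)) - 1‖ ≤ min (‖z‖ * x) 2 := by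
    refine le_min ?_ ?_
    · have hre : (-(z * (x:ℂ))).re ≤ 0 := by
        rw [Complex.neg_re, Complex.mul_re]
        simp only [Complex.ofReal_re, Complex.ofReal_im, mul_zero, sub_zero]
        exact neg_nonpos.2 (mul_nonneg hz hx.le)
      calc ‖Complex.exp (-(z * x)) - 1‖ ≤ ‖-(z * (x:ℂ))‖ := norm_cexp_sub_one_le hre
        _ = ‖z‖ * x := by
          rw [norm_neg, norm_mul, Complex.norm_real, Real.norm_of_nonneg hx.le]
    · have h1 : ‖Complex.exp (-(z * x))‖ ≤ 1 := by
        rw [Complex.norm_exp]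
        refine Real.exp_le_one_iff.2 ?_
        rw [Complex.neg_re, Complex.mul_re]
        simp only [Complex.ofReal_re, Complex.ofReal_im, mul_zero, sub_zero]
        exact neg_nonpos.2 (mul_nonneg hz hx.le)
      calc ‖Complex.exp (-(z * x)) - 1‖ ≤ ‖Complex.exp (-(z * x))‖ + ‖(1:ℂ)‖ :=
            norm_sub_le _ _
        _ ≤ 1 + 1 := by simpa using h1
        _ = 2 := by norm_num
  have : ‖f β z x‖ = ‖Complex.exp (-(z * x)) - 1‖ / x ^ (1 + β) := by
    rw [f, norm_div, Complex.norm_real, Real.norm_of_nonneg hd.le]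
  rw [this, Real.rpow_neg hx.le, div_eq_mul_inv]
  exact mul_le_mul_of_nonneg_right hnum (by positivity)

lemma bound_integrable (h0 : 0 < β) (h1 : β < 1) {C : ℝ} (hC : 0 ≤ C) :
    IntegrableOn (fun x : ℝ => min (C * x) 2 * x ^ (-(1 + β))) (Ioi 0) := by
  have hmeas : AEStronglyMeasurable (fun x : ℝ => min (C * x) 2 * x ^ (-(1 + β)))
      (volume.restrict (Ioi (0:ℝ))) := by
    refine ContinuousOn.aestronglyMeasurable ?_ measurableSet_Ioi
    exact ((continuous_const.mul continuous_id).min continuous_const).continuousOn.mul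
      (continuousOn_id.rpow_const fun x hx => Or.inl (ne_of_gt hx))
  have hIoc : IntegrableOn (fun x : ℝ => min (C * x) 2 * x ^ (-(1 + β))) (Ioc 0 1) := by
    have hint : IntegrableOn (fun x : ℝ => C * x ^ (-β)) (Ioc 0 1) := by
      have := intervalIntegral.intervalIntegrable_rpow' (a := 0) (b := 1)
        (show (-1:ℝ) < -β by linarith)
      rw [intervalIntegrable_iff_integrableOn_Ioc_of_le zero_le_one] at this
      exact this.const_mul C
    refine Integrable.mono hint (hmeas.mono_set Ioc_subset_Ioi_self) ?_
    filter_upwards [ae_restrict_mem measurableSet_Ioc] with x hx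
    have hx0 : 0 < x := hx.1
    have hb : min (C * x) 2 * x ^ (-(1 + β)) ≤ C * x ^ (-β) := by
      calc min (C * x) 2 * x ^ (-(1 + β)) ≤ C * x * x ^ (-(1 + β)) :=
            mul_le_mul_of_nonneg_right (min_le_left _ _) (Real.rpow_nonneg hx0.le _)
        _ = C * x ^ (-β) := by
            rw [mul_assoc]
            congr 1
            nth_rewrite 1 [← Real.rpow_one x]
            rw [← Real.rpow_add hx0]
            norm_num
    have hnn : 0 ≤ min (C * x) 2 * x ^ (-(1 + β)) :=
      mul_nonneg (le_min (mul_nonneg hC hx0.le) (by norm_num) : (0:ℝ) ≤ min (C * x) 2)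
        (Real.rpow_nonneg hx0.le _)
    rw [Real.norm_of_nonneg hnn]
    exact hb.trans (le_abs_self _)
  have hIoi : IntegrableOn (fun x : ℝ => min (C * x) 2 * x ^ (-(1 + β))) (Ioi 1) := by
    have hint : IntegrableOn (fun x : ℝ => 2 * x ^ (-(1 + β))) (Ioi 1) :=
      (integrableOn_Ioi_rpow_of_lt (show -(1 + β) < -1 by linarith) one_pos).const_mul 2
    refine Integrable.mono hint (hmeas.mono_set (Ioi_subset_Ioi zero_le_one)) ?_
    filter_upwards [ae_restrict_mem measurableSet_Ioi] with x hx
    have hx0 : (0:ℝ) < x := lt_trans one_pos hx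
    have hnn : 0 ≤ min (C * x) 2 * x ^ (-(1 + β)) :=
      mul_nonneg (le_min (mul_nonneg hC hx0.le) (by norm_num) : (0:ℝ) ≤ min (C * x) 2)
        (Real.rpow_nonneg hx0.le _)
    rw [Real.norm_of_nonneg hnn]
    refine le_trans (mul_le_mul_of_nonneg_right (min_le_right _ _)
      (Real.rpow_nonneg hx0.le _)) (le_abs_self _)
  have : IntegrableOn (fun x : ℝ => min (C * x) 2 * x ^ (-(1 + β))) (Ioc 0 1 ∪ Ioi 1) :=
    hIoc.union hIoi
  rwa [Ioc_union_Ioi_eq_Ioi zero_le_one] at this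

lemma f_contOn (z : ℂ) : ContinuousOn (f β z) (Ioi 0) := by
  apply ContinuousOn.div
  · exact (((continuous_const.mul Complex.continuous_ofReal).neg.cexp).sub
      continuous_const).continuousOn
  · exact Complex.continuous_ofReal.comp_continuousOn
      (continuousOn_id.rpow_const fun x hx => Or.inl (ne_of_gt hx))
  · intro x hx
    simp only [ne_eq, Complex.ofReal_eq_zero]
    exact (Real.rpow_pos_of_pos hx _).ne'

lemma f_integrableOn (h0 : 0 < β) (h1 : β < 1) {z : ℂ} (hz : 0 ≤ z.re) :
    IntegrableOn (f β z) (Ioi 0) := by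
  refine Integrable.mono (bound_integrable h0 h1 (norm_nonneg z))
    ((f_contOn z).aestronglyMeasurable measurableSet_Ioi) ?_
  filter_upwards [ae_restrict_mem measurableSet_Ioi] with x hx
  refine le_trans (f_bound h0 hz hx) (le_abs_self _)

lemma L_integrand_integrable (h0 : 0 < β) (h1 : β < 1) {z : ℂ} (hz : 0 < z.re) :
    IntegrableOn (fun x : ℝ => Complex.exp (-(z * x)) * ((x ^ (-β) : ℝ) : ℂ)) (Ioi 0) := by
  have hint : IntegrableOn (fun x : ℝ => x ^ (-β) * Real.exp (-z.re * x)) (Ioi 0) := by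
    have := integrableOn_rpow_mul_exp_neg_mul_rpow (p := 1) (s := -β) (b := z.re)
      (by linarith) zero_lt_one hz
    simpa using this
  refine Integrable.mono hint ?_ ?_
  · refine ContinuousOn.aestronglyMeasurable ?_ measurableSet_Ioi
    exact ((continuous_const.mul Complex.continuous_ofReal).neg.cexp).continuousOn.mul
      (Complex.continuous_ofReal.comp_continuousOn
        (continuousOn_id.rpow_const fun x hx => Or.inl (ne_of_gt hx)))
  · filter_upwards [ae_restrict_mem measurableSet_Ioi] with x hx
    rw [norm_mul, Complex.norm_exp,
      Complex.norm_real, Real.norm_of_nonneg (Real.rpow_nonneg hx.le _)]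
    have : (-(z * (x:ℂ))).re = -z.re * x := by
      rw [Complex.neg_re, Complex.mul_re]
      simp [Complex.ofReal_re, Complex.ofReal_im]
    rw [this, mul_comm]
    exact le_abs_self _

lemma L_real (h0 : 0 < β) (h1 : β < 1) {r : ℝ} (hr : 0 < r) :
    L β (r : ℂ) = (Real.Gamma (1 - β) : ℂ) * (r : ℂ) ^ ((β : ℂ) - 1) := by
  have ha : (0:ℝ) < ((1:ℂ) - (β:ℂ)).re := by
    simp only [Complex.sub_re, Complex.one_re, Complex.ofReal_re]
    linarith
  have key := integral_cpow_mul_exp_neg_mul_Ioi (a := (1:ℂ) - (β:ℂ)) (r := r) ha hr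
  have hL : L β (r : ℂ)
      = ∫ t in Ioi (0:ℝ), (t:ℂ) ^ ((1:ℂ) - (β:ℂ) - 1) * Complex.exp (-((r:ℂ) * t)) := by
    rw [L]
    refine setIntegral_congr_fun measurableSet_Ioi fun x hx => ?_
    rw [mul_comm]
    congr 1
    rw [Complex.ofReal_cpow (le_of_lt hx)]
    congr 1
    push_cast
    ring
  rw [hL, key]
  have h1r : ((1:ℂ)/r) ^ ((1:ℂ) - (β:ℂ)) = (r:ℂ) ^ ((β:ℂ) - 1) := by
    have e1 : ((1:ℂ)/r) = (((1/r : ℝ)) : ℂ) := by push_cast; ring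
    have e2 : (1:ℂ) - (β:ℂ) = ((1 - β : ℝ) : ℂ) := by push_cast; ring
    have e3 : (β:ℂ) - 1 = ((β - 1 : ℝ) : ℂ) := by push_cast; ring
    rw [e1, e2, e3, ← Complex.ofReal_cpow (by positivity), ← Complex.ofReal_cpow hr.le]
    congr 1
    rw [one_div, Real.inv_rpow hr.le, ← Real.rpow_neg hr.le, neg_sub]
  rw [h1r, mul_comm]
  congr 1
  have : (1:ℂ) - (β:ℂ) = ((1 - β : ℝ) : ℂ) := by push_cast; ring
  rw [this, Complex.Gamma_ofReal]


lemma L_holo (h0 : 0 < β) (h1 : β < 1) :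
    DifferentiableOn ℂ (L β) {z : ℂ | 0 < z.re} := by
  intro z₀ hz₀
  have hz₀' : 0 < z₀.re := hz₀
  set ε : ℝ := z₀.re / 2 with hε
  have hεpos : 0 < ε := by positivity
  have hmeas : ∀ z : ℂ, AEStronglyMeasurable
      (fun x : ℝ => Complex.exp (-(z * x)) * ((x ^ (-β) : ℝ) : ℂ))
      (volume.restrict (Ioi 0)) := fun z =>
    (((continuous_const.mul Complex.continuous_ofReal).neg.cexp).continuousOn.mul
      (Complex.continuous_ofReal.comp_continuousOn
        (continuousOn_id.rpow_const fun x hx => Or.inl (ne_of_gt hx)))).aestronglyMeasurable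
      measurableSet_Ioi
  have hmeas' : AEStronglyMeasurable
      (fun x : ℝ => Complex.exp (-(z₀ * x)) * (-(x:ℂ)) * ((x ^ (-β) : ℝ) : ℂ))
      (volume.restrict (Ioi 0)) := by
    refine ContinuousOn.aestronglyMeasurable ?_ measurableSet_Ioi
    exact (((continuous_const.mul Complex.continuous_ofReal).neg.cexp).continuousOn.mul
      (Complex.continuous_ofReal.neg.continuousOn)).mul
      (Complex.continuous_ofReal.comp_continuousOn
        (continuousOn_id.rpow_const fun x hx => Or.inl (ne_of_gt hx)))
  have hboundint : Integrable (fun x : ℝ => x ^ (1 - β) * Real.exp (-ε * x))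
      (volume.restrict (Ioi 0)) := by
    have := integrableOn_rpow_mul_exp_neg_mul_rpow (p := 1) (s := 1 - β) (b := ε)
      (by linarith) zero_lt_one hεpos
    simpa [IntegrableOn] using this
  have key := hasDerivAt_integral_of_dominated_loc_of_deriv_le (𝕜 := ℂ)
    (μ := volume.restrict (Ioi (0:ℝ)))
    (F := fun z (x : ℝ) => Complex.exp (-(z * x)) * ((x ^ (-β) : ℝ) : ℂ))
    (F' := fun z (x : ℝ) => Complex.exp (-(z * x)) * (-(x:ℂ)) * ((x ^ (-β) : ℝ) : ℂ))
    (x₀ := z₀) (bound := fun x : ℝ => x ^ (1 - β) * Real.exp (-ε * x)) (Metric.ball_mem_nhds z₀ hεpos)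
    (Eventually.of_forall hmeas) (L_integrand_integrable h0 h1 hz₀') hmeas' ?_ hboundint ?_
  · exact key.2.differentiableAt.differentiableWithinAt
  · -- bound
    filter_upwards [ae_restrict_mem measurableSet_Ioi] with x hx z hz
    have hx0 : (0:ℝ) < x := hx
    have hzre : ε ≤ z.re := by
      have : |z.re - z₀.re| ≤ dist z z₀ := by
        rw [Complex.dist_eq]
        simpa using Complex.abs_re_le_norm (z - z₀)
      have hlt : |z.re - z₀.re| < ε := lt_of_le_of_lt this (Metric.mem_ball.1 hz)
      have := abs_lt.1 hlt
      simp only [hε] at this ⊢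
      linarith [this.1]
    rw [norm_mul, norm_mul, Complex.norm_exp,
      norm_neg, Complex.norm_real, Complex.norm_real, Real.norm_of_nonneg hx0.le,
      Real.norm_of_nonneg (Real.rpow_nonneg hx0.le _)]
    have hre : (-(z * (x:ℂ))).re = -(z.re * x) := by
      rw [Complex.neg_re, Complex.mul_re]
      simp [Complex.ofReal_re, Complex.ofReal_im]
    rw [hre]
    have hexp : Real.exp (-(z.re * x)) ≤ Real.exp (-ε * x) := by
      apply Real.exp_le_exp.2
      have := mul_le_mul_of_nonneg_right hzre hx0.le
      linarith
    calc Real.exp (-(z.re * x)) * x * x ^ (-β)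
        ≤ Real.exp (-ε * x) * x * x ^ (-β) := by
          apply mul_le_mul_of_nonneg_right _ (Real.rpow_nonneg hx0.le _)
          exact mul_le_mul_of_nonneg_right hexp hx0.le
      _ = x ^ (1 - β) * Real.exp (-ε * x) := by
          have hxx : x * x ^ (-β) = x ^ (1 - β) := by
            nth_rewrite 1 [← Real.rpow_one x]
            rw [← Real.rpow_add hx0, sub_eq_add_neg]
          calc Real.exp (-ε * x) * x * x ^ (-β)
              = x * x ^ (-β) * Real.exp (-ε * x) := by ring
            _ = x ^ (1 - β) * Real.exp (-ε * x) := by rw [hxx]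
  · -- derivative
    filter_upwards with x
    intro z _
    have h1 : HasDerivAt (fun z : ℂ => -(z * (x:ℂ))) (-(x:ℂ)) z := by
      simpa [Pi.neg_def] using ((hasDerivAt_id z).mul_const (x:ℂ)).neg
    exact (h1.cexp.mul_const _)

lemma L_eq (h0 : 0 < β) (h1 : β < 1) {z : ℂ} (hz : 0 < z.re) :
    L β z = (Real.Gamma (1 - β) : ℂ) * z ^ ((β : ℂ) - 1) := by
  have hopen : IsOpen {z : ℂ | 0 < z.re} := isOpen_lt continuous_const Complex.continuous_re
  have hf : AnalyticOnNhd ℂ (L β) {z : ℂ | 0 < z.re} :=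
    (L_holo h0 h1).analyticOnNhd hopen
  have hg : AnalyticOnNhd ℂ (fun z : ℂ => (Real.Gamma (1 - β) : ℂ) * z ^ ((β:ℂ) - 1))
      {z : ℂ | 0 < z.re} := by
    refine DifferentiableOn.analyticOnNhd ?_ hopen
    intro w hw
    exact ((differentiableAt_id.cpow (differentiableAt_const _)
      (Complex.mem_slitPlane_iff.2 (Or.inl hw))).const_mul _).differentiableWithinAt
  have hU : IsPreconnected {z : ℂ | 0 < z.re} := (convex_halfSpace_re_gt 0).isPreconnected
  have h1mem : (1:ℂ) ∈ {z : ℂ | 0 < z.re} := by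
    simp only [Set.mem_setOf_eq, Complex.one_re]; norm_num
  have hfreq : ∃ᶠ w in 𝓝[≠] (1:ℂ),
      L β w = (Real.Gamma (1 - β) : ℂ) * w ^ ((β:ℂ) - 1) := by
    have htend : Tendsto (fun n : ℕ => ((1 + 1/(n+1) : ℝ) : ℂ)) atTop (𝓝[≠] (1:ℂ)) := by
      apply tendsto_nhdsWithin_of_tendsto_nhds_of_eventually_within
      · have h2 : Tendsto (fun n : ℕ => (1 + 1/(n+1) : ℝ)) atTop (𝓝 1) := by
          have := tendsto_one_div_add_atTop_nhds_zero_nat (𝕜 := ℝ)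
          simpa using tendsto_const_nhds.add this
        have := (Complex.continuous_ofReal.tendsto 1).comp h2
        simpa [Function.comp_def] using this
      · filter_upwards with n
        simp only [Set.mem_compl_iff, Set.mem_singleton_iff]
        intro h
        have h' : (1 + 1/(n+1) : ℝ) = 1 := by exact_mod_cast h
        have hp : (0:ℝ) < 1/(n+1) := by positivity
        linarith
    refine htend.frequently (Frequently.of_forall fun n => ?_)
    exact L_real h0 h1 (by positivity : (0:ℝ) < 1 + 1/(n+1))
  exact hf.eqOn_of_preconnected_of_frequently_eq hg hU h1mem hfreq hz

lemma K_eq (h0 : 0 < β) (h1 : β < 1) {z : ℂ} (hz : 0 < z.re) :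
    ∫ x in Ioi (0:ℝ), f β z x = -(z / β) * L β z := by
  have hβ : (β:ℂ) ≠ 0 := by exact_mod_cast h0.ne'
  set u : ℝ → ℂ := fun x => Complex.exp (-(z * x)) - 1 with hu_def
  set u' : ℝ → ℂ := fun x => Complex.exp (-(z * x)) * (-z) with hu'_def
  set v : ℝ → ℂ := fun x => -((x ^ (-β) : ℝ) : ℂ) / β with hv_def
  set v' : ℝ → ℂ := fun x => ((x ^ (-(1+β)) : ℝ) : ℂ) with hv'_def
  have hu : ∀ x ∈ Ioi (0:ℝ), HasDerivAt u (u' x) x := by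
    intro x hx
    have hd : HasDerivAt (fun x : ℝ => -(z * (x:ℂ))) (-z) x := by
      simpa [Pi.neg_def] using ((Complex.ofRealCLM.hasDerivAt (x := x)).const_mul z).neg
    have := hd.cexp.sub_const 1
    simpa [hu_def, hu'_def, mul_comm] using this
  have hv : ∀ x ∈ Ioi (0:ℝ), HasDerivAt v (v' x) x := by
    intro x hx
    have hr : HasDerivAt (fun x : ℝ => x ^ (-β)) (-β * x ^ (-β - 1)) x :=
      Real.hasDerivAt_rpow_const (Or.inl (ne_of_gt hx))
    have hc : HasDerivAt (fun x : ℝ => ((x ^ (-β) : ℝ) : ℂ))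
        ((-β * x ^ (-β - 1) : ℝ) : ℂ) x := hr.ofReal_comp
    have hd := hc.neg.div_const (β:ℂ)
    refine hd.congr_deriv ?_
    have he : (-(1+β) : ℝ) = -β - 1 := by ring
    simp only [hv'_def, he]
    push_cast
    field_simp
  have hEq : Set.EqOn (f β z) (fun x => u x * v' x) (Ioi 0) := by
    intro x hx
    simp only [f, hu_def, hv'_def]
    rw [Real.rpow_neg (le_of_lt hx), Complex.ofReal_inv, div_eq_mul_inv]
  have huv' : IntegrableOn (fun x => u x * v' x) (Ioi 0) :=
    (f_integrableOn h0 h1 hz.le).congr_fun hEq measurableSet_Ioi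
  have hEq2 : Set.EqOn (fun x : ℝ => (z/β) * (Complex.exp (-(z * x)) * ((x ^ (-β) : ℝ) : ℂ)))
      (fun x => u' x * v x) (Ioi 0) := by
    intro x hx
    simp only [hu'_def, hv_def]
    field_simp
  have hbase : IntegrableOn
      (fun x : ℝ => (z/β) * (Complex.exp (-(z * x)) * ((x ^ (-β) : ℝ) : ℂ))) (Ioi 0) :=
    (L_integrand_integrable h0 h1 hz).const_mul (z/β)
  have hu'v : IntegrableOn (fun x => u' x * v x) (Ioi 0) :=
    hbase.congr_fun hEq2 measurableSet_Ioi
  have h_zero : Tendsto (fun x => u x * v x) (𝓝[>] (0:ℝ)) (𝓝 0) := by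
    apply squeeze_zero_norm'
    · filter_upwards [self_mem_nhdsWithin] with x (hx : (0:ℝ) < x)
      have h1' : ‖u x‖ ≤ ‖z‖ * x := by
        have hre : (-(z * (x:ℂ))).re ≤ 0 := by
          rw [Complex.neg_re, Complex.mul_re]
          simp only [Complex.ofReal_re, Complex.ofReal_im, mul_zero, sub_zero]
          exact neg_nonpos.2 (mul_nonneg hz.le hx.le)
        calc ‖u x‖ ≤ ‖-(z * (x:ℂ))‖ := norm_cexp_sub_one_le hre
          _ = ‖z‖ * x := by rw [norm_neg, norm_mul, Complex.norm_real,
              Real.norm_of_nonneg hx.le]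
      have h2' : ‖v x‖ = x ^ (-β) / β := by
        simp only [hv_def]
        rw [norm_div, norm_neg, Complex.norm_real,
          Real.norm_of_nonneg (Real.rpow_nonneg hx.le _), Complex.norm_real,
          Real.norm_of_nonneg h0.le]
      calc ‖u x * v x‖ = ‖u x‖ * ‖v x‖ := norm_mul _ _
        _ ≤ (‖z‖ * x) * (x ^ (-β) / β) := by
            rw [h2']
            exact mul_le_mul_of_nonneg_right h1' (by positivity)
        _ = (‖z‖ / β) * x ^ (1 - β) := by
            have hxx : x * x ^ (-β) = x ^ (1 - β) := by
              nth_rewrite 1 [← Real.rpow_one x]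
              rw [← Real.rpow_add hx, sub_eq_add_neg]
            field_simp
            calc ‖z‖ * x * x ^ (-β) = ‖z‖ * (x * x ^ (-β)) := by ring
              _ = ‖z‖ * x ^ (1 - β) := by rw [hxx]
    · have hc : ContinuousAt (fun x : ℝ => x ^ (1 - β)) 0 :=
        Real.continuousAt_rpow_const 0 _ (Or.inr (by linarith))
      have h3 := (hc.tendsto.mono_left nhdsWithin_le_nhds :
        Tendsto (fun x : ℝ => x ^ (1 - β)) (𝓝[>] 0) (𝓝 ((0:ℝ) ^ (1 - β))))
      rw [Real.zero_rpow (by linarith : (1:ℝ) - β ≠ 0)] at h3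
      simpa using h3.const_mul (‖z‖ / β)
  have h_infty : Tendsto (fun x => u x * v x) atTop (𝓝 0) := by
    apply squeeze_zero_norm'
    · filter_upwards [eventually_gt_atTop (0:ℝ)] with x hx
      have h1' : ‖u x‖ ≤ 2 := by
        have hle : ‖Complex.exp (-(z * x))‖ ≤ 1 := by
          rw [Complex.norm_exp]
          refine Real.exp_le_one_iff.2 ?_
          rw [Complex.neg_re, Complex.mul_re]
          simp only [Complex.ofReal_re, Complex.ofReal_im, mul_zero, sub_zero]
          exact neg_nonpos.2 (mul_nonneg hz.le hx.le)
        calc ‖u x‖ ≤ ‖Complex.exp (-(z * x))‖ + ‖(1:ℂ)‖ := norm_sub_le _ _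
          _ ≤ 1 + 1 := by simpa using hle
          _ = 2 := by norm_num
      have h2' : ‖v x‖ = x ^ (-β) / β := by
        simp only [hv_def]
        rw [norm_div, norm_neg, Complex.norm_real,
          Real.norm_of_nonneg (Real.rpow_nonneg hx.le _), Complex.norm_real,
          Real.norm_of_nonneg h0.le]
      calc ‖u x * v x‖ = ‖u x‖ * ‖v x‖ := norm_mul _ _
        _ ≤ 2 * (x ^ (-β) / β) := by
            rw [h2']
            exact mul_le_mul_of_nonneg_right h1' (by positivity)
        _ = (2 / β) * x ^ (-β) := by ring
    · have := tendsto_rpow_neg_atTop h0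
      simpa using this.const_mul (2 / β)
  have key := MeasureTheory.integral_Ioi_mul_deriv_eq_deriv_mul hu hv huv' hu'v h_zero h_infty
  rw [setIntegral_congr_fun measurableSet_Ioi hEq, key]
  rw [← setIntegral_congr_fun measurableSet_Ioi hEq2]
  rw [integral_const_mul]
  simp only [L]
  ring

lemma K_closed (h0 : 0 < β) (h1 : β < 1) {z : ℂ} (hz : 0 < z.re) :
    ∫ x in Ioi (0:ℝ), f β z x
      = -((Real.Gamma (1 - β) : ℂ) / β) * z ^ (β : ℂ) := by
  rw [K_eq h0 h1 hz, L_eq h0 h1 hz]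
  have hzne : z ≠ 0 := by
    intro h
    rw [h] at hz
    simp at hz
  have hpow : z ^ (β:ℂ) = z * z ^ ((β:ℂ) - 1) := by
    have h := Complex.cpow_add (x := z) 1 ((β:ℂ) - 1) hzne
    rw [Complex.cpow_one] at h
    have he : (1 : ℂ) + ((β:ℂ) - 1) = (β:ℂ) := by ring
    rw [he] at h
    exact h
  rw [hpow]
  ring

lemma K_value (h0 : 0 < β) (h1 : β < 1) :
    ∫ x in Ioi (0:ℝ), f β (-Complex.I) x
      = -((Real.Gamma (1 - β) : ℂ) / β) * (-Complex.I) ^ (β : ℂ) := by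
  have hLHS : Tendsto (fun ε : ℝ => ∫ x in Ioi (0:ℝ), f β ((ε:ℂ) - Complex.I) x)
      (𝓝[>] (0:ℝ)) (𝓝 (∫ x in Ioi (0:ℝ), f β (-Complex.I) x)) := by
    apply tendsto_integral_filter_of_dominated_convergence
      (bound := fun x : ℝ => min (2 * x) 2 * x ^ (-(1+β)))
    · filter_upwards with ε
      exact (f_contOn _).aestronglyMeasurable measurableSet_Ioi
    · filter_upwards [Ioc_mem_nhdsGT_of_mem (Set.mem_Ico.2 ⟨le_refl (0:ℝ), zero_lt_one⟩)]
        with ε hε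
      filter_upwards [ae_restrict_mem measurableSet_Ioi] with x hx
      have hre : (0:ℝ) ≤ ((ε:ℂ) - Complex.I).re := by
        simp [Complex.sub_re, hε.1.le]
      have hn : ‖(ε:ℂ) - Complex.I‖ ≤ 2 := by
        calc ‖(ε:ℂ) - Complex.I‖ ≤ ‖(ε:ℂ)‖ + ‖Complex.I‖ := norm_sub_le _ _
          _ ≤ 1 + 1 := by
              rw [Complex.norm_real, Complex.norm_I, Real.norm_of_nonneg hε.1.le]
              exact add_le_add_left hε.2 1
          _ = 2 := by norm_num
      refine le_trans (f_bound h0 hre hx) ?_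
      refine mul_le_mul_of_nonneg_right ?_ (Real.rpow_nonneg (le_of_lt hx) _)
      exact min_le_min (mul_le_mul_of_nonneg_right hn (le_of_lt hx)) le_rfl
    · exact bound_integrable h0 h1 (by norm_num)
    · filter_upwards [ae_restrict_mem measurableSet_Ioi] with x hx
      have hcont : ContinuousAt (fun ε : ℝ => f β ((ε:ℂ) - Complex.I) x) 0 := by
        apply ContinuousAt.div
        · exact ((((Complex.continuous_ofReal.sub continuous_const).mul
            continuous_const).neg.cexp).sub continuous_const).continuousAt
        · exact continuousAt_const
        · simp only [ne_eq, Complex.ofReal_eq_zero]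
          exact (Real.rpow_pos_of_pos hx _).ne'
      have h2 := hcont.tendsto.mono_left (nhdsWithin_le_nhds (s := Set.Ioi (0:ℝ)))
      simpa using h2
  have hRHS : Tendsto (fun ε : ℝ =>
      -((Real.Gamma (1 - β) : ℂ) / β) * ((ε:ℂ) - Complex.I) ^ (β:ℂ))
      (𝓝[>] (0:ℝ)) (𝓝 (-((Real.Gamma (1 - β) : ℂ) / β) * (-Complex.I) ^ (β:ℂ))) := by
    have hc : ContinuousAt (fun z : ℂ => z ^ (β:ℂ)) (-Complex.I) :=
      continuousAt_cpow_const (Complex.mem_slitPlane_iff.2 (Or.inr (by simp)))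
    have hcc : ContinuousAt (fun ε : ℝ => ((ε:ℂ) - Complex.I) ^ (β:ℂ)) 0 := by
      have hin : ContinuousAt (fun ε : ℝ => (ε:ℂ) - Complex.I) 0 :=
        (Complex.continuous_ofReal.sub continuous_const).continuousAt
      have : ((0:ℝ):ℂ) - Complex.I = -Complex.I := by simp
      exact ContinuousAt.comp (by rwa [this]) hin
    have h2 := (hcc.tendsto.mono_left (nhdsWithin_le_nhds (s := Set.Ioi (0:ℝ)))).const_mul
      (-((Real.Gamma (1 - β) : ℂ) / β))
    simpa using h2
  have heq : ∀ᶠ (ε : ℝ) in 𝓝[>] (0:ℝ), (∫ x in Ioi (0:ℝ), f β ((ε:ℂ) - Complex.I) x)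
      = -((Real.Gamma (1 - β) : ℂ) / β) * ((ε:ℂ) - Complex.I) ^ (β:ℂ) := by
    filter_upwards [self_mem_nhdsWithin] with ε (hε : (0:ℝ) < ε)
    refine K_closed h0 h1 ?_
    simp [Complex.sub_re, hε]
  exact tendsto_nhds_unique (hLHS.congr' heq) hRHS

end StableAux

open StableAux

/-- for `0 < β < 1`, the improper integral `∫_0^∞ (e^{ix} - 1)/x^{1+β} dx`
converges (as an improper integral at infinity) and
`β ∫_0^∞ (e^{ix} - 1)/x^{1+β} dx = -c (1 - i tan(βπ/2))` with `c = Γ(1-β) cos(βπ/2)`. -/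
theorem stable_integral_beta_lt_one (β : ℝ) (h0 : 0 < β) (h1 : β < 1) :
    Tendsto (fun T : ℝ => (β : ℂ) * ∫ x in (0:ℝ)..T,
        (Complex.exp ((x : ℂ) * Complex.I) - 1) / ((x ^ (1 + β) : ℝ) : ℂ))
      atTop
      (nhds (-((Real.Gamma (1 - β) * Real.cos (β * Real.pi / 2) : ℝ) : ℂ)
        * (1 - Complex.I * ((Real.tan (β * Real.pi / 2) : ℝ) : ℂ)))) := by
  have hfun : ∀ x : ℝ, (Complex.exp ((x:ℂ) * Complex.I) - 1) / ((x ^ (1 + β) : ℝ) : ℂ)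
      = StableAux.f β (-Complex.I) x := by
    intro x
    rw [StableAux.f]
    congr 3
    ring
  have hint : IntegrableOn (StableAux.f β (-Complex.I)) (Set.Ioi 0) :=
    StableAux.f_integrableOn h0 h1 (by simp)
  have htend := MeasureTheory.intervalIntegral_tendsto_integral_Ioi 0 hint tendsto_id
  have htend2 : Tendsto (fun T : ℝ => (β : ℂ) * ∫ x in (0:ℝ)..T,
      (Complex.exp ((x : ℂ) * Complex.I) - 1) / ((x ^ (1 + β) : ℝ) : ℂ)) atTop
      (nhds ((β:ℂ) * ∫ x in Set.Ioi (0:ℝ), StableAux.f β (-Complex.I) x)) := by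
    have hfe : ∀ T : ℝ, (∫ x in (0:ℝ)..T,
        (Complex.exp ((x : ℂ) * Complex.I) - 1) / ((x ^ (1 + β) : ℝ) : ℂ))
        = ∫ x in (0:ℝ)..T, StableAux.f β (-Complex.I) x := fun T =>
      intervalIntegral.integral_congr fun x _ => hfun x
    simp only [hfe]
    exact htend.const_mul _
  have hval : (β:ℂ) * ∫ x in Set.Ioi (0:ℝ), StableAux.f β (-Complex.I) x
      = -((Real.Gamma (1 - β) * Real.cos (β * Real.pi / 2) : ℝ) : ℂ)
        * (1 - Complex.I * ((Real.tan (β * Real.pi / 2) : ℝ) : ℂ)) := by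
    rw [StableAux.K_value h0 h1]
    have hI : (-Complex.I) ^ (β:ℂ)
        = ((Real.cos (β * Real.pi / 2) : ℝ) : ℂ)
          - ((Real.sin (β * Real.pi / 2) : ℝ) : ℂ) * Complex.I := by
      rw [Complex.cpow_def_of_ne_zero (by simp), Complex.log_neg_I]
      have harg : (-((Real.pi:ℂ) / 2) * Complex.I) * (β:ℂ)
          = ((-(β * Real.pi / 2) : ℝ) : ℂ) * Complex.I := by
        push_cast
        ring
      rw [harg, Complex.exp_mul_I, ← Complex.ofReal_cos, ← Complex.ofReal_sin,
        Real.cos_neg, Real.sin_neg]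
      push_cast
      ring
    rw [hI]
    have hβ : (β:ℂ) ≠ 0 := by exact_mod_cast h0.ne'
    have hcos : Real.cos (β * Real.pi / 2) ≠ 0 := by
      refine ne_of_gt (Real.cos_pos_of_mem_Ioo ⟨?_, ?_⟩)
      · have := Real.pi_pos
        nlinarith
      · have := Real.pi_pos
        nlinarith
    have hcosC : ((Real.cos (β * Real.pi / 2) : ℝ) : ℂ) ≠ 0 := by exact_mod_cast hcos
    rw [Real.tan_eq_sin_div_cos, Complex.ofReal_mul, Complex.ofReal_div]
    set G := ((Real.Gamma (1 - β) : ℝ) : ℂ) with hG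
    set cc := ((Real.cos (β * Real.pi / 2) : ℝ) : ℂ) with hccdef
    set ss := ((Real.sin (β * Real.pi / 2) : ℝ) : ℂ) with hssdef
    field_simp
  rw [← hval]
  exact htend2
end

section
/- Let X_1, ..., X_n be independent nonnegative random variables with distribution functions F_k satisfying conditions (I) and (II) with indices α_k → α ∈ (0,1), for a truncation sequence b_n → ∞. If h_n := ∑_{k=1}^n (1 - F_k(b_n)) → ∞, then the Lyapunov ratio ∑_{k=1}^n E|X_k(b_n) - μ_k(b_n)|³ / (∑_{k=1}^n Var(X_k(b_n)))^{3/2} = O(h_n^{-1/2}) → 0 as n → ∞. -/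
open Filter MeasureTheory Real

private lemma int_bdd {Ω : Type*} [MeasurableSpace Ω] (μ : Measure Ω) [IsFiniteMeasure μ]
    {f : Ω → ℝ} (hf : Measurable f) {c : ℝ} (h : ∀ ω, |f ω| ≤ c) : Integrable f μ :=
  (integrable_const c).mono' hf.aestronglyMeasurable (Filter.Eventually.of_forall
    (fun ω => by simpa using h ω))

set_option maxHeartbeats 1000000 in
/-- under conditions (I) and (II), if `h_n = ∑_{k<n} (1-F_k(b_n)) → ∞`,
the Lyapunov ratio `∑ E|X_k(b_n)-μ_k(b_n)|³ / (∑ Var X_k(b_n))^{3/2}` is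
`O(h_n^{-1/2})` and tends to `0`. -/
theorem lyapunov_ratio_tendsto_zero
    {Ω : Type*} [MeasurableSpace Ω] (μ : Measure Ω) [IsProbabilityMeasure μ]
    (X : ℕ → Ω → ℝ) (hX : ∀ k, Measurable (X k)) (hXnonneg : ∀ k ω, 0 ≤ X k ω)
    (αs : ℕ → ℝ) (α : ℝ) (hαs : ∀ k, 0 < αs k ∧ αs k < 1)
    (hα : 0 < α ∧ α < 1) (hαlim : Tendsto αs atTop (nhds α))
    (b : ℕ → ℝ) (hbpos : ∀ n, 0 < b n) (hb : Tendsto b atTop atTop)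
    (F : ℕ → ℝ → ℝ) (hF : ∀ k x, F k x = (μ {ω | X k ω ≤ x}).toReal)
    -- condition (I): max_{k<n} (1 - F_k(b_n)) → 0
    (hI : ∀ ε > 0, ∃ N, ∀ n ≥ N, ∀ k < n, 1 - F k (b n) < ε)
    -- condition (II): E[X_k(b_n)^r] = (1+o(1)) (α_k/(r-α_k)) b_n^r (1-F_k(b_n)) → ∞,
    -- uniformly in k ≤ n
    (hII : ∀ r : ℝ, 1 ≤ r →
      (∀ ε > 0, ∃ N, ∀ n ≥ N, ∀ k < n,
        |(∫ ω, (if X k ω ≤ b n then X k ω else 0) ^ r ∂μ)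
            - (αs k / (r - αs k)) * b n ^ r * (1 - F k (b n))|
          ≤ ε * ((αs k / (r - αs k)) * b n ^ r * (1 - F k (b n))))
      ∧ (∀ M : ℝ, ∃ N, ∀ n ≥ N, ∀ k < n,
          M ≤ ∫ ω, (if X k ω ≤ b n then X k ω else 0) ^ r ∂μ))
    (hh : Tendsto (fun n => ∑ k ∈ Finset.range n, (1 - F k (b n))) atTop atTop) :
    let T : ℕ → ℕ → Ω → ℝ := fun n k ω => if X k ω ≤ b n then X k ω else 0
    let m : ℕ → ℕ → ℝ := fun n k => ∫ ω, T n k ω ∂μ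
    let ratio : ℕ → ℝ := fun n =>
      (∑ k ∈ Finset.range n, ∫ ω, |T n k ω - m n k| ^ 3 ∂μ)
        / (∑ k ∈ Finset.range n, ∫ ω, (T n k ω - m n k) ^ 2 ∂μ) ^ ((3:ℝ)/2)
    (∃ C > 0, ∀ᶠ n in atTop,
      ratio n ≤ C / Real.sqrt (∑ k ∈ Finset.range n, (1 - F k (b n))))
    ∧ Tendsto ratio atTop (nhds 0) := by
  intro T m ratio
  -- uniform bounds on αs
  obtain ⟨a, ha0, has⟩ : ∃ a : ℝ, 0 < a ∧ ∀ k, a ≤ αs k ∧ αs k ≤ 1 - a := by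
    have hε : (0:ℝ) < min α (1 - α) / 2 :=
      div_pos (lt_min hα.1 (by linarith [hα.2])) two_pos
    obtain ⟨K, hK⟩ := Metric.tendsto_atTop.mp hαlim (min α (1 - α) / 2) hε
    set g : ℕ → ℝ := fun k => min (αs k) (1 - αs k) with hg
    have hgpos : ∀ k, 0 < g k := fun k => lt_min (hαs k).1 (by linarith [(hαs k).2])
    have hne : (Finset.range (K + 1)).Nonempty := ⟨0, by simp⟩
    refine ⟨min (min α (1 - α) / 2) ((Finset.range (K + 1)).inf' hne g),
      lt_min hε ?_, fun k => ?_⟩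
    · exact (Finset.lt_inf'_iff hne).mpr fun j _ => hgpos j
    · by_cases hk : k ≤ K
      · have hmem : k ∈ Finset.range (K + 1) := Finset.mem_range.mpr (by omega)
        have h1 := Finset.inf'_le g hmem
        have h2 : g k ≤ αs k := min_le_left _ _
        have h3 : g k ≤ 1 - αs k := min_le_right _ _
        have h4 := min_le_right (min α (1 - α) / 2) ((Finset.range (K + 1)).inf' hne g)
        exact ⟨by linarith, by linarith⟩
      · have hd := hK k (by omega)
        rw [Real.dist_eq] at hd
        have h1 := abs_lt.mp hd
        have hm1 : min α (1 - α) ≤ α := min_le_left _ _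
        have hm2 : min α (1 - α) ≤ 1 - α := min_le_right _ _
        have h4 := min_le_left (min α (1 - α) / 2) ((Finset.range (K + 1)).inf' hne g)
        exact ⟨by linarith, by linarith⟩
  have ha2 : ∀ k, 0 < 1 - αs k := fun k => by linarith [(has k).2, ha0]
  have ha3 : ∀ k, 0 < 2 - αs k := fun k => by linarith [(hαs k).2]
  have hc2 : ∀ k, a / 2 ≤ αs k / (2 - αs k) := fun k => by
    rw [le_div_iff₀ (ha3 k)]
    nlinarith [(has k).1, (hαs k).2, ha0]
  have hc1 : ∀ k, αs k / (1 - αs k) ≤ 1 / a := fun k => by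
    rw [div_le_div_iff₀ (ha2 k) ha0]
    nlinarith [(has k).1, (has k).2, (hαs k).1]
  have hc1' : ∀ k, a * (αs k / (1 - αs k)) ≤ 1 := fun k => by
    have := mul_le_mul_of_nonneg_left (hc1 k) ha0.le
    calc a * (αs k / (1 - αs k)) ≤ a * (1 / a) := this
      _ = 1 := by field_simp
  -- pick the thresholds
  obtain ⟨N0, hN0⟩ := hI (a ^ 3 / 18) (by positivity)
  obtain ⟨N1, hN1⟩ := (hII 1 le_rfl).1 (1/2) (by norm_num)
  obtain ⟨N2, hN2⟩ := (hII 2 (by norm_num)).1 (1/2) (by norm_num)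
  obtain ⟨N3, hN3⟩ := eventually_atTop.mp (tendsto_atTop.mp hh 1)
  -- F ≤ 1
  have hF1 : ∀ k x, F k x ≤ 1 := fun k x => by
    rw [hF]
    have h1 : (μ {ω | X k ω ≤ x}) ≤ 1 := prob_le_one
    have h2 := ENNReal.toReal_mono (by simp) h1
    simpa using h2
  -- basic facts about T and m
  have hTnn : ∀ n k ω, 0 ≤ T n k ω := fun n k ω => by
    show 0 ≤ if X k ω ≤ b n then X k ω else 0
    split_ifs with h
    · exact hXnonneg k ω
    · exact le_rfl
  have hTle : ∀ n k ω, T n k ω ≤ b n := fun n k ω => by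
    show (if X k ω ≤ b n then X k ω else 0) ≤ b n
    split_ifs with h
    · exact h
    · exact (hbpos n).le
  have hTmeas : ∀ n k, Measurable (T n k) := fun n k => by
    show Measurable fun ω => if X k ω ≤ b n then X k ω else 0
    exact Measurable.ite (measurableSet_le (hX k) measurable_const)
      (hX k) measurable_const
  have hTabs : ∀ n k ω, |T n k ω| ≤ b n := fun n k ω =>
    abs_le.mpr ⟨by linarith [hTnn n k ω, hbpos n], hTle n k ω⟩
  have hTint : ∀ n k, Integrable (T n k) μ := fun n k =>
    int_bdd μ (hTmeas n k) (hTabs n k)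
  have hT2int : ∀ n k, Integrable (fun ω => T n k ω ^ 2) μ := fun n k =>
    int_bdd μ ((hTmeas n k).pow_const 2) (c := b n ^ 2)
      (fun ω => by rw [abs_pow]; exact pow_le_pow_left₀ (abs_nonneg _) (hTabs n k ω) 2)
  have hm0 : ∀ n k, 0 ≤ m n k := fun n k => integral_nonneg (hTnn n k)
  have hmb : ∀ n k, m n k ≤ b n := fun n k => by
    have h1 : ∫ ω, T n k ω ∂μ ≤ ∫ _, b n ∂μ :=
      integral_mono (hTint n k) (integrable_const _) (hTle n k)
    simpa using h1
  have hTmabs : ∀ n k ω, |T n k ω - m n k| ≤ b n := fun n k ω =>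
    abs_le.mpr ⟨by linarith [hTnn n k ω, hmb n k], by linarith [hTle n k ω, hm0 n k]⟩
  have hsq_int : ∀ n k, Integrable (fun ω => (T n k ω - m n k) ^ 2) μ := fun n k =>
    int_bdd μ (((hTmeas n k).sub measurable_const).pow_const 2) (c := b n ^ 2)
      (fun ω => by rw [abs_pow]; exact pow_le_pow_left₀ (abs_nonneg _) (hTmabs n k ω) 2)
  have habs3_int : ∀ n k, Integrable (fun ω => |T n k ω - m n k| ^ 3) μ := fun n k =>
    int_bdd μ (((hTmeas n k).sub measurable_const).abs.pow_const 3) (c := b n ^ 3)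
      (fun ω => by
        rw [abs_pow, abs_abs]
        exact pow_le_pow_left₀ (abs_nonneg _) (hTmabs n k ω) 3)
  -- variance identity
  have hVarEq : ∀ n k, ∫ ω, (T n k ω - m n k) ^ 2 ∂μ
      = (∫ ω, T n k ω ^ 2 ∂μ) - m n k ^ 2 := by
    intro n k
    have hfe : (fun ω => (T n k ω - m n k) ^ 2)
        = fun ω => T n k ω ^ 2 - (2 * m n k) * T n k ω + m n k ^ 2 := by
      funext ω; ring
    have hmd : ∫ ω, T n k ω ∂μ = m n k := rfl
    have hfint : Integrable (fun ω => T n k ω ^ 2 - 2 * m n k * T n k ω) μ :=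
      (hT2int n k).sub ((hTint n k).const_mul _)
    have hgint : Integrable (fun ω => 2 * m n k * T n k ω) μ :=
      (hTint n k).const_mul _
    rw [hfe, integral_add hfint (integrable_const _),
      integral_sub (hT2int n k) hgint, integral_const_mul, integral_const, hmd]
    simp [measure_univ]
    ring
  -- pointwise cube bound and integrated version
  have hNumk : ∀ n k, ∫ ω, |T n k ω - m n k| ^ 3 ∂μ
      ≤ b n * ∫ ω, (T n k ω - m n k) ^ 2 ∂μ := by
    intro n k
    have hcube : ∀ ω, |T n k ω - m n k| ^ 3 ≤ b n * (T n k ω - m n k) ^ 2 := by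
      intro ω
      have h1 : |T n k ω - m n k| ^ 3
          = |T n k ω - m n k| * (T n k ω - m n k) ^ 2 := by
        rw [← sq_abs]; ring
      rw [h1]
      exact mul_le_mul_of_nonneg_right (hTmabs n k ω) (sq_nonneg _)
    rw [← integral_const_mul]
    exact integral_mono (habs3_int n k) ((hsq_int n k).const_mul _) hcube
  -- lower bound on each variance
  have hVarLB : ∀ n, N0 ≤ n → N1 ≤ n → N2 ≤ n → ∀ k, k < n →
      a / 8 * b n ^ 2 * (1 - F k (b n)) ≤ ∫ ω, (T n k ω - m n k) ^ 2 ∂μ := by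
    intro n hn0 hn1 hn2 k hk
    set p := 1 - F k (b n) with hp
    have hp0 : 0 ≤ p := by have := hF1 k (b n); simp only [hp]; linarith
    have hpδ : p < a ^ 3 / 18 := hN0 n hn0 k hk
    -- first moment
    have h1 := hN1 n hn1 k hk
    have e1 : (∫ ω, (if X k ω ≤ b n then X k ω else 0) ^ (1:ℝ) ∂μ) = m n k := by
      show _ = ∫ ω, T n k ω ∂μ
      congr 1; funext ω
      show (if X k ω ≤ b n then X k ω else 0) ^ (1:ℝ)
        = if X k ω ≤ b n then X k ω else 0
      rw [Real.rpow_one]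
    rw [e1, Real.rpow_one] at h1
    have habs1 := abs_le.mp h1
    have hm_ub : m n k ≤ (3/2) * (αs k / (1 - αs k) * b n * p) := by
      have := habs1.2; linarith
    have h_am : a * m n k ≤ (3/2) * (b n * p) := by
      nlinarith [mul_le_mul_of_nonneg_left hm_ub ha0.le,
        mul_le_mul_of_nonneg_right (hc1' k) (mul_nonneg (hbpos n).le hp0)]
    -- second moment
    have h2 := hN2 n hn2 k hk
    have e2 : (∫ ω, (if X k ω ≤ b n then X k ω else 0) ^ (2:ℝ) ∂μ)
        = ∫ ω, T n k ω ^ 2 ∂μ := by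
      congr 1; funext ω
      show (if X k ω ≤ b n then X k ω else 0) ^ (2:ℝ)
        = (if X k ω ≤ b n then X k ω else 0) ^ 2
      rw [Real.rpow_two]
    rw [e2, Real.rpow_two] at h2
    have habs2 := abs_le.mp h2
    have hI2 : a / 4 * (b n ^ 2 * p) ≤ ∫ ω, T n k ω ^ 2 ∂μ := by
      have h2' := habs2.1
      have hbp : 0 ≤ b n ^ 2 * p := mul_nonneg (sq_nonneg _) hp0
      nlinarith [mul_le_mul_of_nonneg_right (hc2 k) hbp]
    -- combine
    rw [hVarEq n k]
    have hm2 : m n k ^ 2 ≤ a / 8 * (b n ^ 2 * p) := by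
      nlinarith [mul_self_le_mul_self (mul_nonneg ha0.le (hm0 n k)) h_am,
        mul_le_mul_of_nonneg_left hpδ.le
          (show (0:ℝ) ≤ 9/4 * (b n ^ 2 * p) by positivity),
        mul_pos ha0 ha0, sq_nonneg (b n), hp0, ha0]
    nlinarith [hI2, hm2]
  -- main eventual bound
  set C : ℝ := 1 / Real.sqrt (a / 8) with hC
  have hCpos : 0 < C := by
    rw [hC]
    exact one_div_pos.mpr (Real.sqrt_pos.mpr (by linarith))
  have main : ∀ n, max (max N0 N1) (max N2 N3) ≤ n →
      ratio n ≤ C / Real.sqrt (∑ k ∈ Finset.range n, (1 - F k (b n))) := by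
    intro n hn
    have hn0 : N0 ≤ n := le_trans ((le_max_left _ _).trans (le_max_left _ _)) hn
    have hn1 : N1 ≤ n := le_trans ((le_max_right _ _).trans (le_max_left _ _)) hn
    have hn2 : N2 ≤ n := le_trans ((le_max_left _ _).trans (le_max_right _ _)) hn
    have hn3 : N3 ≤ n := le_trans ((le_max_right _ _).trans (le_max_right _ _)) hn
    set h := ∑ k ∈ Finset.range n, (1 - F k (b n)) with hh'
    set D := ∑ k ∈ Finset.range n, ∫ ω, (T n k ω - m n k) ^ 2 ∂μ with hD'
    set Num := ∑ k ∈ Finset.range n, ∫ ω, |T n k ω - m n k| ^ 3 ∂μ with hNum'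
    have h1 : 1 ≤ h := hN3 n hn3
    have hDlb : a / 8 * b n ^ 2 * h ≤ D := by
      rw [hD', hh', Finset.mul_sum]
      exact Finset.sum_le_sum fun k hk =>
        hVarLB n hn0 hn1 hn2 k (Finset.mem_range.mp hk)
    have hDpos : 0 < D :=
      lt_of_lt_of_le
        (mul_pos (mul_pos (by linarith : (0:ℝ) < a/8) (pow_pos (hbpos n) 2))
          (by linarith : (0:ℝ) < h)) hDlb
    have hNum_le : Num ≤ b n * D := by
      rw [hNum', hD', Finset.mul_sum]
      exact Finset.sum_le_sum fun k _ => hNumk n k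
    have hratio : ratio n = Num / D ^ ((3:ℝ)/2) := rfl
    have hDpow : D ^ ((3:ℝ)/2) = D * Real.sqrt D := by
      rw [show (3:ℝ)/2 = 1 + 1/2 by norm_num, Real.rpow_add hDpos, Real.rpow_one,
        Real.sqrt_eq_rpow]
    have hstep1 : ratio n ≤ (b n * D) / D ^ ((3:ℝ)/2) := by
      rw [hratio]
      gcongr
    have hstep2 : (b n * D) / D ^ ((3:ℝ)/2) = b n / Real.sqrt D := by
      rw [hDpow, mul_comm (b n) D, mul_div_mul_left _ _ (ne_of_gt hDpos)]
    have hsq_eq : Real.sqrt (a / 8 * b n ^ 2 * h)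
        = Real.sqrt (a/8) * b n * Real.sqrt h := by
      rw [Real.sqrt_mul (by positivity), Real.sqrt_mul (by linarith : (0:ℝ) ≤ a/8),
        Real.sqrt_sq (hbpos n).le]
    have hsqpos : 0 < Real.sqrt (a / 8 * b n ^ 2 * h) :=
      Real.sqrt_pos.mpr
        (mul_pos (mul_pos (by linarith : (0:ℝ) < a/8) (pow_pos (hbpos n) 2))
          (by linarith : (0:ℝ) < h))
    have hstep3 : b n / Real.sqrt D ≤ b n / Real.sqrt (a / 8 * b n ^ 2 * h) :=
      div_le_div_of_nonneg_left (hbpos n).le hsqpos (Real.sqrt_le_sqrt hDlb)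
    have hstep4 : b n / Real.sqrt (a / 8 * b n ^ 2 * h) = C / Real.sqrt h := by
      rw [hsq_eq, hC]
      have hb' : b n ≠ 0 := (hbpos n).ne'
      have hs' : Real.sqrt (a/8) ≠ 0 := (Real.sqrt_pos.mpr (by linarith)).ne'
      field_simp
    calc ratio n ≤ (b n * D) / D ^ ((3:ℝ)/2) := hstep1
      _ = b n / Real.sqrt D := hstep2
      _ ≤ b n / Real.sqrt (a / 8 * b n ^ 2 * h) := hstep3
      _ = C / Real.sqrt h := hstep4
  have hEv : ∀ᶠ n in atTop,
      ratio n ≤ C / Real.sqrt (∑ k ∈ Finset.range n, (1 - F k (b n))) :=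
    eventually_atTop.mpr ⟨max (max N0 N1) (max N2 N3), main⟩
  refine ⟨⟨C, hCpos, hEv⟩, ?_⟩
  have hratio_nn : ∀ n, 0 ≤ ratio n := fun n => by
    show 0 ≤ (∑ k ∈ Finset.range n, ∫ ω, |T n k ω - m n k| ^ 3 ∂μ)
        / (∑ k ∈ Finset.range n, ∫ ω, (T n k ω - m n k) ^ 2 ∂μ) ^ ((3:ℝ)/2)
    apply div_nonneg
    · exact Finset.sum_nonneg fun k _ =>
        integral_nonneg fun ω => pow_nonneg (abs_nonneg _) 3
    · exact Real.rpow_nonneg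
        (Finset.sum_nonneg fun k _ => integral_nonneg fun ω => sq_nonneg _) _
  have hsqrt_atTop : Tendsto
      (fun n => Real.sqrt (∑ k ∈ Finset.range n, (1 - F k (b n)))) atTop atTop := by
    have h12 := (tendsto_rpow_atTop (show (0:ℝ) < 1/2 by norm_num)).comp hh
    refine h12.congr fun n => ?_
    simp [Function.comp, Real.sqrt_eq_rpow]
  have hg : Tendsto
      (fun n => C / Real.sqrt (∑ k ∈ Finset.range n, (1 - F k (b n)))) atTop
      (nhds 0) := hsqrt_atTop.const_div_atTop C
  exact squeeze_zero' (Eventually.of_forall hratio_nn) hEv hg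
end

section
/- Under conditions (I) and (II) with h_n = ∑_{k=1}^n (1 - F_k(b_n)) → ∞, the ratio ∑_{k=1}^n (μ_k(b_n) - μ_0(b_n))² / ∑_{k=1}^n Var(X_k(b_n)) → 0 as n → ∞, where μ_0(b_n) = n^{-1}∑_{k=1}^n μ_k(b_n). -/
open Filter MeasureTheory Real

/-- Variance identity for integrable square-integrable functions. -/
lemma aux_var_eq {Ω : Type*} [MeasurableSpace Ω] (μ : Measure Ω) [IsProbabilityMeasure μ]
    (T : Ω → ℝ) (hT : Integrable T μ) (hT2 : Integrable (fun ω => T ω ^ 2) μ) :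
    ∫ ω, (T ω - ∫ ω', T ω' ∂μ) ^ 2 ∂μ
      = (∫ ω, T ω ^ 2 ∂μ) - (∫ ω, T ω ∂μ) ^ 2 := by
  set c := ∫ ω', T ω' ∂μ with hc
  have h1 : (fun ω => (T ω - c)^2) = fun ω => T ω ^ 2 - (2*c*T ω - c^2) := by
    funext ω; ring
  have hg : Integrable (fun ω => 2*c*T ω - c^2) μ := by
    exact (hT.const_mul (2*c)).sub (integrable_const (c^2))
  have hg1 : Integrable (fun ω => 2*c*T ω) μ := hT.const_mul (2*c)
  rw [h1, integral_sub hT2 hg, integral_sub hg1 (integrable_const (c^2)),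
    integral_const_mul, integral_const]
  simp only [measure_univ, probReal_univ, ENNReal.toReal_one, smul_eq_mul, one_mul]
  rw [← hc]; ring

/-- Sum of squared deviations from the mean is at most the sum of squares. -/
lemma aux_sum_sq_dev (n : ℕ) (m : ℕ → ℝ) :
    ∑ k ∈ Finset.range n, (m k - (∑ j ∈ Finset.range n, m j) / n) ^ 2
      ≤ ∑ k ∈ Finset.range n, (m k) ^ 2 := by
  rcases Nat.eq_zero_or_pos n with hn | hn
  · simp [hn]
  set S := ∑ j ∈ Finset.range n, m j with hS
  set c := S / n with hcdef
  have hn' : (0:ℝ) < n := by exact_mod_cast hn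
  have hexp : ∀ k, (m k - c)^2 = (m k)^2 - 2*c*(m k) + c^2 := fun k => by ring
  have h1 : ∑ k ∈ Finset.range n, (m k - c)^2
      = (∑ k ∈ Finset.range n, (m k)^2) - 2*c*S + (n:ℝ)*c^2 := by
    simp_rw [hexp]
    rw [Finset.sum_add_distrib, Finset.sum_sub_distrib, ← Finset.mul_sum,
      Finset.sum_const, Finset.card_range, nsmul_eq_mul, ← hS]
  rw [h1]
  have key : 2*c*S - (n:ℝ)*c^2 = S^2/n := by
    rw [hcdef]; field_simp; ring
  nlinarith [div_nonneg (sq_nonneg S) hn'.le]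

/-- A sequence in (0,1) converging to α ∈ (0,1) is uniformly bounded inside (0,1). -/
lemma aux_alpha_bounds (αs : ℕ → ℝ) (α : ℝ) (hαs : ∀ k, 0 < αs k ∧ αs k < 1)
    (hα : 0 < α ∧ α < 1) (hαlim : Tendsto αs atTop (nhds α)) :
    ∃ δ β : ℝ, 0 < δ ∧ δ ≤ β ∧ β < 1 ∧ ∀ k, δ ≤ αs k ∧ αs k ≤ β := by
  have hmem : ∀ᶠ k in atTop, αs k ∈ Set.Icc (α/2) ((1+α)/2) := by
    apply hαlim
    apply Icc_mem_nhds <;> linarith [hα.1, hα.2]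
  obtain ⟨N, hN⟩ := eventually_atTop.mp hmem
  have fin : ∀ M : ℕ, ∃ δ β : ℝ, 0 < δ ∧ β < 1 ∧ ∀ k < M, δ ≤ αs k ∧ αs k ≤ β := by
    intro M
    induction M with
    | zero => exact ⟨1/2, 1/2, by norm_num, by norm_num, fun k hk => absurd hk (by omega)⟩
    | succ M ih =>
      obtain ⟨δ, β, hδ, hβ, hall⟩ := ih
      refine ⟨min δ (αs M / 2), max β ((αs M + 1)/2), ?_, ?_, ?_⟩
      · exact lt_min hδ (by linarith [(hαs M).1])
      · exact max_lt hβ (by linarith [(hαs M).2])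
      · intro k hk
        rcases Nat.lt_succ_iff_lt_or_eq.mp hk with hk' | hk'
        · exact ⟨le_trans (min_le_left _ _) (hall k hk').1,
            le_trans (hall k hk').2 (le_max_left _ _)⟩
        · subst hk'
          constructor
          · exact le_trans (min_le_right _ _) (by linarith [(hαs k).1])
          · exact le_trans (by linarith [(hαs k).2]) (le_max_right _ _)
  obtain ⟨δ, β, hδ, hβ, hall⟩ := fin N
  refine ⟨min δ (α/2), max β ((1+α)/2), lt_min hδ (by linarith [hα.1]), ?_, ?_, ?_⟩
  · calc min δ (α/2) ≤ α/2 := min_le_right _ _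
      _ ≤ (1+α)/2 := by linarith [hα.1]
      _ ≤ max β ((1+α)/2) := le_max_right _ _
  · exact max_lt hβ (by linarith [hα.2])
  · intro k
    rcases lt_or_ge k N with hk | hk
    · exact ⟨le_trans (min_le_left _ _) (hall k hk).1,
        le_trans (hall k hk).2 (le_max_left _ _)⟩
    · have := hN k hk
      exact ⟨le_trans (min_le_right _ _) this.1, le_trans this.2 (le_max_right _ _)⟩

set_option maxHeartbeats 1600000 in
/-- under conditions (I) and (II), if `h_n = ∑_{k<n}(1-F_k(b_n)) → ∞`,
then `∑ (μ_k(b_n) - μ_0(b_n))² / ∑ Var(X_k(b_n)) → 0`. -/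
theorem mean_spread_over_variance_tendsto_zero
    {Ω : Type*} [MeasurableSpace Ω] (μ : Measure Ω) [IsProbabilityMeasure μ]
    (X : ℕ → Ω → ℝ) (hX : ∀ k, Measurable (X k)) (hXnonneg : ∀ k ω, 0 ≤ X k ω)
    (αs : ℕ → ℝ) (α : ℝ) (hαs : ∀ k, 0 < αs k ∧ αs k < 1)
    (hα : 0 < α ∧ α < 1) (hαlim : Tendsto αs atTop (nhds α))
    (b : ℕ → ℝ) (hbpos : ∀ n, 0 < b n) (hb : Tendsto b atTop atTop)
    (F : ℕ → ℝ → ℝ) (hF : ∀ k x, F k x = (μ {ω | X k ω ≤ x}).toReal)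
    -- condition (I)
    (hI : ∀ ε > 0, ∃ N, ∀ n ≥ N, ∀ k < n, 1 - F k (b n) < ε)
    -- condition (II)
    (hII : ∀ r : ℝ, 1 ≤ r →
      (∀ ε > 0, ∃ N, ∀ n ≥ N, ∀ k < n,
        |(∫ ω, (if X k ω ≤ b n then X k ω else 0) ^ r ∂μ)
            - (αs k / (r - αs k)) * b n ^ r * (1 - F k (b n))|
          ≤ ε * ((αs k / (r - αs k)) * b n ^ r * (1 - F k (b n))))
      ∧ (∀ M : ℝ, ∃ N, ∀ n ≥ N, ∀ k < n,
          M ≤ ∫ ω, (if X k ω ≤ b n then X k ω else 0) ^ r ∂μ))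
    (hh : Tendsto (fun n => ∑ k ∈ Finset.range n, (1 - F k (b n))) atTop atTop) :
    let T : ℕ → ℕ → Ω → ℝ := fun n k ω => if X k ω ≤ b n then X k ω else 0
    let m : ℕ → ℕ → ℝ := fun n k => ∫ ω, T n k ω ∂μ
    let m0 : ℕ → ℝ := fun n => (∑ k ∈ Finset.range n, m n k) / n
    Tendsto (fun n =>
      (∑ k ∈ Finset.range n, (m n k - m0 n) ^ 2)
        / (∑ k ∈ Finset.range n, ∫ ω, (T n k ω - m n k) ^ 2 ∂μ)) atTop (nhds 0) := by
  intro T m m0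
  -- basic properties of T
  have hTmeas : ∀ n k, Measurable (T n k) := fun n k =>
    Measurable.ite (measurableSet_le (hX k) measurable_const) (hX k) measurable_const
  have hTnonneg : ∀ n k ω, 0 ≤ T n k ω := by
    intro n k ω; simp only [T]; split <;> [exact hXnonneg k ω; exact le_refl 0]
  have hTle : ∀ n k ω, T n k ω ≤ b n := by
    intro n k ω; simp only [T]; split <;> [assumption; exact (hbpos n).le]
  have hTint : ∀ n k, Integrable (T n k) μ := by
    intro n k
    refine (integrable_const (b n)).mono' (hTmeas n k).aestronglyMeasurable
      (ae_of_all _ fun ω => ?_)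
    rw [Real.norm_eq_abs, abs_of_nonneg (hTnonneg n k ω)]
    exact hTle n k ω
  have hT2int : ∀ n k, Integrable (fun ω => T n k ω ^ 2) μ := by
    intro n k
    refine (integrable_const (b n ^ 2)).mono' ((hTmeas n k).pow_const 2).aestronglyMeasurable
      (ae_of_all _ fun ω => ?_)
    rw [Real.norm_eq_abs, abs_of_nonneg (sq_nonneg _)]
    exact pow_le_pow_left₀ (hTnonneg n k ω) (hTle n k ω) 2
  have hmnonneg : ∀ n k, 0 ≤ m n k :=
    fun n k => integral_nonneg (hTnonneg n k)
  -- uniform bounds on αs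
  obtain ⟨δ, β, hδ, hδβ, hβ, hbound⟩ := aux_alpha_bounds αs α hαs hα hαlim
  have hβpos : 0 < β := lt_of_lt_of_le hδ hδβ
  set d1 : ℕ → ℝ := fun k => αs k / (1 - αs k) with hd1def
  set d2 : ℕ → ℝ := fun k => αs k / (2 - αs k) with hd2def
  have hd1pos : ∀ k, 0 < d1 k := fun k =>
    div_pos (hαs k).1 (by linarith [(hαs k).2])
  have hd2pos : ∀ k, 0 < d2 k := fun k =>
    div_pos (hαs k).1 (by linarith [(hαs k).2])
  have hd1le : ∀ k, d1 k ≤ β / (1 - β) := by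
    intro k
    rw [hd1def, div_le_div_iff₀ (by linarith [(hαs k).2]) (by linarith)]
    nlinarith [(hbound k).2, (hαs k).1, hβpos]
  have hd2ge : ∀ k, δ / 2 ≤ d2 k := by
    intro k
    rw [hd2def, div_le_div_iff₀ (by norm_num) (by linarith [(hαs k).2])]
    nlinarith [(hbound k).1, (hαs k).1, (hαs k).2, hδ]
  set K : ℝ := (β / (1 - β))^2 * (2 / δ) with hKdef
  have hKpos : 0 < K := by
    apply mul_pos (pow_pos (div_pos hβpos (by linarith)) 2) (by positivity)
  have hd1sq : ∀ k, (d1 k)^2 ≤ K * d2 k := by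
    intro k
    have h1 : (d1 k)^2 ≤ (β / (1-β))^2 := by
      apply pow_le_pow_left₀ (hd1pos k).le (hd1le k)
    have h2 : (β / (1-β))^2 ≤ K * d2 k := by
      have hβne : (1:ℝ) - β ≠ 0 := by linarith
      have hδne : δ ≠ 0 := ne_of_gt hδ
      have heq : (β / (1-β))^2 = K * (δ/2) := by
        rw [hKdef]; field_simp
      rw [heq]
      exact mul_le_mul_of_nonneg_left (hd2ge k) hKpos.le
    linarith
  -- main estimate
  rw [Metric.tendsto_atTop]
  intro ε hε
  set ε₀ : ℝ := min (1/(9*K+1)) (ε/(9*K+1)) with hε₀def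
  have hε₀pos : 0 < ε₀ := lt_min (by positivity) (by positivity)
  obtain ⟨NI, hNI⟩ := hI ε₀ hε₀pos
  obtain ⟨N1, hN1⟩ := (hII 1 le_rfl).1 (1/2) (by norm_num)
  obtain ⟨N2, hN2⟩ := (hII 2 one_le_two).1 (1/2) (by norm_num)
  obtain ⟨Nh, hNh⟩ : ∃ N, ∀ n ≥ N, 1 ≤ ∑ k ∈ Finset.range n, (1 - F k (b n)) := by
    simpa using (hh.eventually_ge_atTop 1).exists_forall_of_atTop
  refine ⟨max (max NI N1) (max N2 Nh), fun n hn => ?_⟩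
  have hnNI : n ≥ NI := le_trans (le_max_left _ _) (le_trans (le_max_left _ _) hn)
  have hnN1 : n ≥ N1 := le_trans (le_max_right _ _) (le_trans (le_max_left _ _) hn)
  have hnN2 : n ≥ N2 := le_trans (le_max_left _ _) (le_trans (le_max_right _ _) hn)
  have hnNh : n ≥ Nh := le_trans (le_max_right _ _) (le_trans (le_max_right _ _) hn)
  set p : ℕ → ℝ := fun k => 1 - F k (b n) with hpdef
  have hp0 : ∀ k, 0 ≤ p k := by
    intro k
    have : F k (b n) ≤ 1 := by
      rw [hF]
      have h := prob_le_one (μ := μ) (s := {ω | X k ω ≤ b n})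
      simpa using ENNReal.toReal_mono ENNReal.one_ne_top h
    simp only [hpdef]; linarith
  have hpε : ∀ k < n, p k < ε₀ := fun k hk => hNI n hnNI k hk
  have hbsq : 0 < b n ^ 2 := pow_pos (hbpos n) 2
  -- moment estimates
  have hm_ub : ∀ k < n, m n k ≤ (3/2) * (d1 k * b n * p k) := by
    intro k hk
    have h1 := hN1 n hnN1 k hk
    simp only [Real.rpow_one] at h1
    have h2 := (abs_le.mp h1).2
    have : m n k = ∫ ω, (if X k ω ≤ b n then X k ω else 0) ∂μ := rfl
    rw [this]
    simp only [hd1def, hpdef]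
    linarith
  have hQ_lb : ∀ k < n, (1/2) * (d2 k * b n ^ 2 * p k) ≤ ∫ ω, T n k ω ^ 2 ∂μ := by
    intro k hk
    have h1 := hN2 n hnN2 k hk
    simp only [Real.rpow_two] at h1
    have h2 := (abs_le.mp h1).1
    have : (∫ ω, T n k ω ^ 2 ∂μ) = ∫ ω, (if X k ω ≤ b n then X k ω else 0) ^ 2 ∂μ := rfl
    rw [this]
    simp only [hd2def, hpdef]
    linarith
  -- variance lower bound
  have h9Kp : ∀ k < n, 9 * K * p k ≤ 1 := by
    intro k hk
    have h1 : p k ≤ 1/(9*K+1) := le_trans (hpε k hk).le (min_le_left _ _)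
    have h2 : 9*K*(1/(9*K+1)) ≤ 1 := by
      rw [mul_one_div, div_le_one (by positivity)]; linarith
    calc 9*K*p k ≤ 9*K*(1/(9*K+1)) := by
          apply mul_le_mul_of_nonneg_left h1 (by positivity)
      _ ≤ 1 := h2
  have hmsq_ub : ∀ k < n, (m n k)^2 ≤ (9/4) * (d1 k)^2 * b n ^ 2 * (p k)^2 := by
    intro k hk
    have h := hm_ub k hk
    have h0 := hmnonneg n k
    nlinarith
  have hmsq_small : ∀ k < n, (m n k)^2 ≤ (1/4) * (d2 k * b n ^ 2 * p k) := by
    intro k hk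
    have h1 := hmsq_ub k hk
    have h2 := hd1sq k
    have h3 := h9Kp k hk
    have h4 := hp0 k
    have h5 := (hd2pos k).le
    have hA : d1 k ^ 2 * p k ≤ K * d2 k * p k := mul_le_mul_of_nonneg_right h2 h4
    calc (m n k)^2 ≤ (9/4) * (d1 k)^2 * b n ^ 2 * (p k)^2 := h1
      _ = (1/4) * ((9 * (d1 k ^ 2 * p k)) * (b n ^ 2 * p k)) := by ring
      _ ≤ (1/4) * ((9 * (K * d2 k * p k)) * (b n ^ 2 * p k)) := by
          apply mul_le_mul_of_nonneg_left _ (by norm_num)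
          apply mul_le_mul_of_nonneg_right _ (mul_nonneg hbsq.le h4)
          linarith
      _ = (1/4) * ((9 * K * p k) * (d2 k * b n ^ 2 * p k)) := by ring
      _ ≤ (1/4) * (1 * (d2 k * b n ^ 2 * p k)) := by
          apply mul_le_mul_of_nonneg_left _ (by norm_num)
          exact mul_le_mul_of_nonneg_right h3
            (mul_nonneg (mul_nonneg h5 hbsq.le) h4)
      _ = (1/4) * (d2 k * b n ^ 2 * p k) := by ring
  have hVar : ∀ k < n, (1/4) * (d2 k * b n ^ 2 * p k) ≤ ∫ ω, (T n k ω - m n k)^2 ∂μ := by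
    intro k hk
    rw [aux_var_eq μ (T n k) (hTint n k) (hT2int n k)]
    have h1 := hQ_lb k hk
    have h2 := hmsq_small k hk
    have : (m n k) = ∫ ω, T n k ω ∂μ := rfl
    rw [← this]
    linarith
  -- sum estimates
  set Num := ∑ k ∈ Finset.range n, (m n k - m0 n)^2 with hNum
  set D := ∑ k ∈ Finset.range n, ∫ ω, (T n k ω - m n k)^2 ∂μ with hD
  set S' := ∑ k ∈ Finset.range n, (1/4) * (d2 k * b n ^ 2 * p k) with hS'
  have hNumnonneg : 0 ≤ Num := Finset.sum_nonneg fun k _ => sq_nonneg _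
  have hS'D : S' ≤ D := Finset.sum_le_sum fun k hk => hVar k (Finset.mem_range.mp hk)
  have hS'pos : 0 < S' := by
    have hsum1 : 1 ≤ ∑ k ∈ Finset.range n, p k := hNh n hnNh
    have hne : ∑ k ∈ Finset.range n, p k ≠ 0 := by linarith
    obtain ⟨k, hkmem, hkne⟩ := Finset.exists_ne_zero_of_sum_ne_zero hne
    have hkpos : 0 < p k := lt_of_le_of_ne (hp0 k) (Ne.symm hkne)
    have hterm : 0 < (1/4) * (d2 k * b n ^ 2 * p k) := by
      have := hd2pos k
      positivity
    calc (0:ℝ) < (1/4) * (d2 k * b n ^ 2 * p k) := hterm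
      _ ≤ S' := Finset.single_le_sum (f := fun k => (1/4) * (d2 k * b n ^ 2 * p k))
          (fun j _ => by
            have := (hd2pos j).le
            have := hp0 j
            positivity) hkmem
  have hDpos : 0 < D := lt_of_lt_of_le hS'pos hS'D
  -- numerator bound
  have hNum_le : Num ≤ 9 * K * ε₀ * S' := by
    have step1 : Num ≤ ∑ k ∈ Finset.range n, (m n k)^2 := by
      rw [hNum]
      exact aux_sum_sq_dev n (m n)
    have step2 : ∑ k ∈ Finset.range n, (m n k)^2
        ≤ ∑ k ∈ Finset.range n, 9 * K * ε₀ * ((1/4) * (d2 k * b n ^ 2 * p k)) := by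
      apply Finset.sum_le_sum
      intro k hk
      have hkn := Finset.mem_range.mp hk
      have h1 := hmsq_ub k hkn
      have h2 := hd1sq k
      have h3 : p k ≤ ε₀ := (hpε k hkn).le
      have h4 := hp0 k
      have h5 := (hd2pos k).le
      have hstep : (d1 k)^2 * (p k)^2 ≤ K * d2 k * (ε₀ * p k) := by
        calc (d1 k)^2 * (p k)^2 ≤ K * d2 k * (p k)^2 :=
              mul_le_mul_of_nonneg_right h2 (sq_nonneg _)
          _ ≤ K * d2 k * (ε₀ * p k) := by
              apply mul_le_mul_of_nonneg_left _ (mul_nonneg hKpos.le h5)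
              rw [pow_two]
              exact mul_le_mul_of_nonneg_right h3 h4
      calc (m n k)^2 ≤ (9/4) * (d1 k)^2 * b n ^ 2 * (p k)^2 := h1
        _ = (9/4) * ((d1 k)^2 * (p k)^2) * b n ^ 2 := by ring
        _ ≤ (9/4) * (K * d2 k * (ε₀ * p k)) * b n ^ 2 := by
            apply mul_le_mul_of_nonneg_right _ hbsq.le
            apply mul_le_mul_of_nonneg_left hstep (by norm_num)
        _ = 9 * K * ε₀ * ((1/4) * (d2 k * b n ^ 2 * p k)) := by ring
    calc Num ≤ ∑ k ∈ Finset.range n, (m n k)^2 := step1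
      _ ≤ ∑ k ∈ Finset.range n, 9 * K * ε₀ * ((1/4) * (d2 k * b n ^ 2 * p k)) := step2
      _ = 9 * K * ε₀ * S' := by rw [hS', Finset.mul_sum]
  have hratio : Num / D ≤ 9 * K * ε₀ := by
    rw [div_le_iff₀ hDpos]
    calc Num ≤ 9 * K * ε₀ * S' := hNum_le
      _ ≤ 9 * K * ε₀ * D := by
        apply mul_le_mul_of_nonneg_left hS'D (by positivity)
  have hfinal : 9 * K * ε₀ < ε := by
    have h1 : ε₀ ≤ ε/(9*K+1) := min_le_right _ _
    have h2 : 9*K*(ε/(9*K+1)) < ε := by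
      rw [mul_div_assoc']
      rw [div_lt_iff₀ (by positivity)]
      nlinarith
    calc 9*K*ε₀ ≤ 9*K*(ε/(9*K+1)) := mul_le_mul_of_nonneg_left h1 (by positivity)
      _ < ε := h2
  rw [Real.dist_eq, sub_zero, abs_of_nonneg (div_nonneg hNumnonneg hDpos.le)]
  exact lt_of_le_of_lt hratio hfinal
end
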